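/- arXiv:1705.01586 — 2 statements merged into one kernel-verified Lean document; each statement's English description precedes it below -/
import Mathlib

section
/- Let G be a countable torsion-free group which is not cyclic, in which every non-identity element lies in a unique maximal cyclic subgroup, and let H be a group with P(H) isomorphic to P(G). Then: (a) every non-identity element of H lies in a unique maximal cyclic subgroup of H; (b) the directed power graphs of G and H are isomorphic; and (c) every graph isomorphism f : P(G) → P(H) is itself an isomorphism of directed power graphs (for all x, y ∈ G, there is an arc x → y in the directed power graph of G if and only if there is an arc f(x) → f(y) in that of H). -/
/-- The power graph of a group `G`: distinct `x, y` are adjacent iff one is a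
nonzero integer power of the other. -/
def powerGraph (G : Type*) [Group G] : SimpleGraph G where
  Adj x y := x ≠ y ∧ ∃ n : ℤ, n ≠ 0 ∧ (y = x ^ n ∨ x = y ^ n)
  symm := by
    constructor
    rintro x y ⟨hxy, n, hn, h⟩
    exact ⟨hxy.symm, n, hn, h.symm⟩
  loopless := by constructor; rintro x ⟨h, -⟩; exact h rfl

/-- There is an arc `x → y` in the directed power graph iff `x ≠ y` and `y` is a
nonzero integer power of `x`. -/
def powArc {G : Type*} [Group G] (x y : G) : Prop :=
  x ≠ y ∧ ∃ n : ℤ, n ≠ 0 ∧ y = x ^ n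

/-- A maximal cyclic subgroup: a cyclic subgroup not properly contained in any
cyclic subgroup. -/
def IsMaxCyclic {G : Type*} [Group G] (C : Subgroup G) : Prop :=
  IsCyclic C ∧ ∀ D : Subgroup G, IsCyclic D → C ≤ D → C = D

section Aux

variable {G : Type*} [Group G]

lemma pg_adj_iff {x y : G} :
    (powerGraph G).Adj x y ↔ x ≠ y ∧ ∃ n : ℤ, n ≠ 0 ∧ (y = x ^ n ∨ x = y ^ n) := Iff.rfl

lemma tf_zpow_inj (htf : ∀ g : G, g ≠ 1 → ¬ IsOfFinOrder g) {g : G} (hg : g ≠ 1) :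
    Function.Injective fun n : ℤ => g ^ n :=
  injective_zpow_iff_not_isOfFinOrder.mpr (htf g hg)

lemma tf_zpow_eq_one (htf : ∀ g : G, g ≠ 1 → ¬ IsOfFinOrder g) {x : G} {n : ℤ}
    (hn : n ≠ 0) (h : x ^ n = 1) : x = 1 := by
  by_contra hx
  exact hn (tf_zpow_inj htf hx (show x ^ n = x ^ (0 : ℤ) by simpa using h))

lemma powArc_adj {x y : G} (h : powArc x y) : (powerGraph G).Adj x y := by
  obtain ⟨hne, n, hn, hy⟩ := h
  exact ⟨hne, n, hn, Or.inl hy⟩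

lemma adj_one_left (htf : ∀ g : G, g ≠ 1 → ¬ IsOfFinOrder g) (y : G) :
    ¬ (powerGraph G).Adj 1 y := by
  rintro ⟨hne, n, hn, h | h⟩
  · rw [one_zpow] at h; exact hne h.symm
  · exact hne (tf_zpow_eq_one htf hn h.symm).symm

lemma isolated_eq_one {v : G} (h : ∀ w, ¬ (powerGraph G).Adj v w) : v = 1 := by
  by_contra hv
  rcases eq_or_ne (v ^ (2:ℤ)) v with h2 | h2
  · apply hv
    have h3 : v * v = v * 1 := by
      rw [mul_one]
      calc v * v = v ^ (2:ℤ) := by rw [zpow_two]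
        _ = v := h2
    exact mul_left_cancel h3
  rcases eq_or_ne (v ^ (2:ℤ)) 1 with h1 | h1
  · exact h 1 ⟨hv, 2, two_ne_zero, Or.inl h1.symm⟩
  · exact h (v ^ (2:ℤ)) ⟨Ne.symm h2, 2, two_ne_zero, Or.inl rfl⟩

/-- The purely graph-theoretic condition characterizing arcs. -/
def PCond {G : Type*} [Group G] (x y : G) : Prop :=
  (powerGraph G).Adj x y ∧
    {z : G | (powerGraph G).Adj z y ∧ ¬ (powerGraph G).Adj z x}.Finite

lemma pcond_powArc (htf : ∀ g : G, g ≠ 1 → ¬ IsOfFinOrder g) {x y : G}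
    (h : PCond x y) : powArc x y := by
  obtain ⟨⟨hxy, n, hn, hcase⟩, hfin⟩ := h
  by_contra hno
  have hno' : ∀ m : ℤ, m ≠ 0 → y ≠ x ^ m := by
    intro m hm hy; exact hno ⟨hxy, m, hm, hy⟩
  obtain ⟨m, hm0, hxm⟩ : ∃ m : ℤ, m ≠ 0 ∧ x = y ^ m := by
    rcases hcase with h1 | h1
    · exact absurd h1 (hno' n hn)
    · exact ⟨n, hn, h1⟩
  have hy1 : y ≠ 1 := by
    rintro rfl; rw [one_zpow] at hxm; exact hxy (hxm.trans rfl)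
  have hinj := tf_zpow_inj htf hy1
  have hm1 : m ≠ 1 := by rintro rfl; rw [zpow_one] at hxm; exact hxy hxm
  have hmneg1 : m ≠ -1 := by
    rintro rfl
    exact hno' (-1) (by norm_num) (by rw [hxm]; group)
  set N := m.natAbs with hN
  have hT : ({p : ℕ | p.Prime} \ Set.Iic N).Infinite :=
    Nat.infinite_setOf_prime.diff (Set.finite_Iic N)
  have hinjOn : Set.InjOn (fun q : ℕ => y ^ (q:ℤ)) ({p : ℕ | p.Prime} \ Set.Iic N) := by
    intro a _ b _ hab
    exact_mod_cast hinj hab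
  have himg : ((fun q : ℕ => y ^ (q:ℤ)) '' ({p : ℕ | p.Prime} \ Set.Iic N)) ⊆
      {z : G | (powerGraph G).Adj z y ∧ ¬ (powerGraph G).Adj z x} := by
    rintro _ ⟨q, ⟨hq, hqN⟩, rfl⟩
    have hqN' : N < q := lt_of_not_ge hqN
    have hq0 : (q:ℤ) ≠ 0 := by exact_mod_cast hq.ne_zero
    constructor
    · refine ⟨fun hzy => ?_, q, hq0, Or.inr rfl⟩
      have : (q:ℤ) = 1 := hinj (hzy.trans (zpow_one y).symm)
      exact hq.ne_one (by exact_mod_cast this)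
    · rintro ⟨hne, k, hk0, hc | hc⟩
      · rw [← zpow_mul] at hc
        have heq : m = q * k := hinj (hxm.symm.trans hc)
        have hdvd : (q:ℤ) ∣ m := ⟨k, heq⟩
        have h1 : (q:ℤ) ≤ |m| :=
          Int.le_of_dvd (abs_pos.mpr hm0) ((dvd_abs _ _).mpr hdvd)
        have h2 : q ≤ N := by
          rw [Int.abs_eq_natAbs] at h1
          rw [hN]
          exact_mod_cast h1
        omega
      · rw [hxm, ← zpow_mul] at hc
        have heq : (q:ℤ) = m * k := hinj hc
        have hdvd : m ∣ (q:ℤ) := ⟨k, heq⟩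
        have hdvd' : m.natAbs ∣ q := by
          simpa using Int.natAbs_dvd_natAbs.mpr hdvd
        rcases hq.eq_one_or_self_of_dvd _ hdvd' with h1 | h1
        · rcases Int.natAbs_eq_iff.mp h1 with h | h
          · exact hm1 (by exact_mod_cast h)
          · exact hmneg1 (by exact_mod_cast h)
        · omega
  exact (hT.image hinjOn).mono himg hfin

lemma finite_int_dvd {j : ℤ} (hj : j ≠ 0) : {k : ℤ | k ∣ j}.Finite := by
  apply Set.Finite.subset (Set.finite_Icc (-|j|) |j|)
  intro k hk
  have h1 : |k| ∣ |j| := (abs_dvd _ _).mpr ((dvd_abs _ _).mpr hk)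
  have h2 : |k| ≤ |j| := Int.le_of_dvd (abs_pos.mpr hj) h1
  exact Set.mem_Icc.mpr (abs_le.mp h2)

lemma cyclic_gen {C : Subgroup G} (hC : IsCyclic C) : ∃ c : G, C = Subgroup.zpowers c := by
  obtain ⟨⟨g, hg⟩, hgen⟩ := hC.exists_generator
  refine ⟨g, le_antisymm ?_ ?_⟩
  · intro x hx
    obtain ⟨k, hk⟩ := Subgroup.mem_zpowers_iff.mp (hgen ⟨x, hx⟩)
    refine Subgroup.mem_zpowers_iff.mpr ⟨k, ?_⟩
    have := congrArg Subtype.val hk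
    simpa using this
  · rw [Subgroup.zpowers_le]; exact hg

lemma isCyclic_zpowers (g : G) : IsCyclic (Subgroup.zpowers g) := by
  refine ⟨⟨⟨g, Subgroup.mem_zpowers g⟩, ?_⟩⟩
  rintro ⟨x, hx⟩
  obtain ⟨k, hk⟩ := Subgroup.mem_zpowers_iff.mp hx
  refine Subgroup.mem_zpowers_iff.mpr ⟨k, ?_⟩
  apply Subtype.ext
  simpa using hk

lemma powArc_pcond (htf : ∀ g : G, g ≠ 1 → ¬ IsOfFinOrder g)
    (hG : ∀ g : G, g ≠ 1 → ∃! C : Subgroup G, IsMaxCyclic C ∧ g ∈ C)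
    {x y : G} (h : powArc x y) : PCond x y := by
  obtain ⟨hxy, n, hn, hyx⟩ := h
  have hx1 : x ≠ 1 := by rintro rfl; rw [one_zpow] at hyx; exact hxy hyx.symm
  have hy1 : y ≠ 1 := by
    rintro hy; rw [hy] at hyx; exact hx1 (tf_zpow_eq_one htf hn hyx.symm)
  refine ⟨⟨hxy, n, hn, Or.inl hyx⟩, ?_⟩
  obtain ⟨C, ⟨hCmax, hyC⟩, huniq⟩ := hG y hy1
  obtain ⟨c, rfl⟩ := cyclic_gen hCmax.1
  obtain ⟨j, hj⟩ := Subgroup.mem_zpowers_iff.mp hyC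
  have hc1 : c ≠ 1 := by rintro rfl; rw [one_zpow] at hj; exact hy1 hj.symm
  have hj0 : j ≠ 0 := by rintro rfl; rw [zpow_zero] at hj; exact hy1 hj.symm
  have hinj := tf_zpow_inj htf hc1
  have hsub : {z : G | (powerGraph G).Adj z y ∧ ¬ (powerGraph G).Adj z x} ⊆
      insert x ((fun k : ℤ => c ^ k) '' {k : ℤ | k ∣ j}) := by
    rintro z ⟨⟨hzy, m, hm0, hc | hc⟩, hnadj⟩
    · -- y = z ^ m : z is a "root" of y
      have hz1 : z ≠ 1 := by
        rintro rfl; rw [one_zpow] at hc; exact hy1 hc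
      obtain ⟨D, ⟨hDmax, hzD⟩, -⟩ := hG z hz1
      have hyD : y ∈ D := by rw [hc]; exact Subgroup.zpow_mem D hzD m
      have hDC : D = Subgroup.zpowers c := huniq D ⟨hDmax, hyD⟩
      rw [hDC] at hzD
      obtain ⟨k, hk⟩ := Subgroup.mem_zpowers_iff.mp hzD
      have hjkm : j = k * m := by
        apply hinj
        show c ^ j = c ^ (k * m)
        rw [hj, hc, ← hk, ← zpow_mul]
      exact Or.inr ⟨k, ⟨m, hjkm⟩, hk⟩
    · -- z = y ^ m = x ^ (n*m)
      by_cases hzx : z = x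
      · exact Or.inl hzx
      · exact absurd ⟨hzx, n * m, mul_ne_zero hn hm0,
          Or.inr (by rw [hc, hyx, ← zpow_mul])⟩ hnadj
  exact Set.Finite.subset ((Set.Finite.image _ (finite_int_dvd hj0)).insert x) hsub

lemma both_arcs_inv (htf : ∀ g : G, g ≠ 1 → ¬ IsOfFinOrder g) {a b : G}
    (h1 : powArc a b) (h2 : powArc b a) : b = a⁻¹ := by
  obtain ⟨hab, n, hn, hb⟩ := h1
  obtain ⟨hba, m, hm, ha⟩ := h2
  have ha1 : a ≠ 1 := by
    rintro rfl; rw [one_zpow] at hb; exact hab hb.symm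
  have hinj := tf_zpow_inj htf ha1
  have : a ^ (n * m) = a ^ (1:ℤ) := by
    rw [zpow_mul, ← hb, ← ha, zpow_one]
  have hnm : n * m = 1 := hinj this
  rcases Int.mul_eq_one_iff_eq_one_or_neg_one.mp hnm with ⟨hn1, -⟩ | ⟨hn1, -⟩
  · exact absurd (by rw [hb, hn1, zpow_one]) hab.symm
  · rw [hb, hn1, zpow_neg, zpow_one]

lemma pcond_of_inv {a b : G} (hadj : (powerGraph G).Adj a b) (hinv : b = a⁻¹) :
    PCond a b := by
  refine ⟨hadj, Set.Finite.subset (Set.finite_singleton a) ?_⟩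
  rintro z ⟨⟨hzb, k, hk, hc | hc⟩, hnadj⟩
  · by_contra hz
    refine hnadj ⟨hz, -k, neg_ne_zero.mpr hk, Or.inl ?_⟩
    rw [zpow_neg, ← hc, hinv, inv_inv]
  · by_contra hz
    refine hnadj ⟨hz, -k, neg_ne_zero.mpr hk, Or.inr ?_⟩
    rw [hc, hinv, inv_zpow, ← zpow_neg]

end Aux

section Iso

variable {G : Type*} {H : Type*} [Group G] [Group H]

lemma pcond_map (f : powerGraph G ≃g powerGraph H) (x y : G) :
    PCond x y ↔ PCond (f x) (f y) := by
  have hadj : ∀ a b : G, (powerGraph H).Adj (f a) (f b) ↔ (powerGraph G).Adj a b :=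
    fun a b => f.map_adj_iff
  have hset : {z : H | (powerGraph H).Adj z (f y) ∧ ¬ (powerGraph H).Adj z (f x)} =
      ⇑f '' {z : G | (powerGraph G).Adj z y ∧ ¬ (powerGraph G).Adj z x} := by
    ext w
    simp only [Set.mem_image, Set.mem_setOf_eq]
    constructor
    · rintro ⟨h1, h2⟩
      refine ⟨f.symm w, ⟨?_, fun hc => h2 ?_⟩, f.apply_symm_apply w⟩
      · rw [← hadj]
        rwa [f.apply_symm_apply]
      · have := (hadj _ _).mpr hc
        rwa [f.apply_symm_apply] at this
    · rintro ⟨z, ⟨h1, h2⟩, rfl⟩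
      exact ⟨(hadj _ _).mpr h1, fun hc => h2 ((hadj _ _).mp hc)⟩
  constructor
  · rintro ⟨h1, h2⟩
    exact ⟨(hadj _ _).mpr h1, by rw [hset]; exact h2.image _⟩
  · rintro ⟨h1, h2⟩
    refine ⟨(hadj _ _).mp h1, ?_⟩
    rw [hset] at h2
    exact Set.Finite.of_finite_image h2 f.injective.injOn

lemma zpowers_image (e : G ≃ H)
    (harc : ∀ x y : G, powArc x y ↔ powArc (e x) (e y)) (he1 : e 1 = 1)
    {g : G} (hg : g ≠ 1) :
    ⇑e '' (Subgroup.zpowers g : Set G) = (Subgroup.zpowers (e g) : Set H) := by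
  ext w
  simp only [Set.mem_image, SetLike.mem_coe, Subgroup.mem_zpowers_iff]
  constructor
  · rintro ⟨x, ⟨k, rfl⟩, rfl⟩
    rcases eq_or_ne k 0 with rfl | hk0
    · exact ⟨0, by rw [zpow_zero, zpow_zero, he1]⟩
    rcases eq_or_ne (g ^ k) g with hgk | hgk
    · exact ⟨1, by rw [zpow_one, hgk]⟩
    · obtain ⟨-, n, -, hn⟩ := (harc g (g ^ k)).mp ⟨Ne.symm hgk, k, hk0, rfl⟩
      exact ⟨n, hn.symm⟩
  · rintro ⟨k, rfl⟩
    rcases eq_or_ne k 0 with rfl | hk0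
    · exact ⟨1, ⟨0, zpow_zero g⟩, by rw [he1, zpow_zero]⟩
    rcases eq_or_ne ((e g) ^ k) (e g) with hgk | hgk
    · exact ⟨g, ⟨1, zpow_one g⟩, hgk.symm⟩
    · have harc2 : powArc g (e.symm ((e g) ^ k)) := by
        rw [harc g (e.symm ((e g) ^ k)), e.apply_symm_apply]
        exact ⟨Ne.symm hgk, k, hk0, rfl⟩
      obtain ⟨-, n, -, hn⟩ := harc2
      exact ⟨e.symm ((e g) ^ k), ⟨n, hn.symm⟩, e.apply_symm_apply _⟩

lemma maxcyclic_map (e : G ≃ H)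
    (harc : ∀ x y : G, powArc x y ↔ powArc (e x) (e y))
    (harc' : ∀ x y : H, powArc x y ↔ powArc (e.symm x) (e.symm y))
    (he1 : e 1 = 1) {c : G} (hc : c ≠ 1)
    (hmax : IsMaxCyclic (Subgroup.zpowers c)) :
    IsMaxCyclic (Subgroup.zpowers (e c)) := by
  have he1' : e.symm 1 = 1 := by rw [← he1, e.symm_apply_apply]
  refine ⟨isCyclic_zpowers _, ?_⟩
  intro D hD hle
  obtain ⟨d, rfl⟩ := cyclic_gen hD
  have hd1 : d ≠ 1 := by
    rintro rfl
    obtain ⟨k, hk⟩ := Subgroup.mem_zpowers_iff.mp (hle (Subgroup.mem_zpowers (e c)))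
    rw [one_zpow] at hk
    exact hc (by rw [← e.symm_apply_apply c, ← hk, he1'])
  have hsd1 : e.symm d ≠ 1 := by
    intro hh
    exact hd1 (by rw [← e.apply_symm_apply d, hh, he1])
  have h1 : (Subgroup.zpowers c : Set G) ⊆ (Subgroup.zpowers (e.symm d) : Set G) := by
    intro x hx
    have hx1 : e x ∈ (Subgroup.zpowers (e c) : Set H) := by
      rw [← zpowers_image e harc he1 hc]; exact ⟨x, hx, rfl⟩
    have hx2 : e x ∈ (Subgroup.zpowers d : Set H) := hle hx1
    have hx3 : e.symm (e x) ∈ ⇑e.symm '' (Subgroup.zpowers d : Set H) := ⟨e x, hx2, rfl⟩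
    rwa [zpowers_image e.symm harc' he1' hd1, e.symm_apply_apply] at hx3
  have hle' : Subgroup.zpowers c ≤ Subgroup.zpowers (e.symm d) := fun x hx => h1 hx
  have heq := hmax.2 _ (isCyclic_zpowers _) hle'
  apply SetLike.coe_injective
  calc (Subgroup.zpowers (e c) : Set H) = ⇑e '' (Subgroup.zpowers c : Set G) :=
        (zpowers_image e harc he1 hc).symm
    _ = ⇑e '' (Subgroup.zpowers (e.symm d) : Set G) := by rw [heq]
    _ = (Subgroup.zpowers (e (e.symm d)) : Set H) := zpowers_image e harc he1 hsd1
    _ = (Subgroup.zpowers d : Set H) := by rw [e.apply_symm_apply]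

end Iso

/-- Let `G` be a countable, non-cyclic, torsion-free group in which every
non-identity element lies in a unique maximal cyclic subgroup, and let `H` have
power graph isomorphic to `P(G)`. Then (a) every non-identity element of `H`
lies in a unique maximal cyclic subgroup; (b) the directed power graphs of `G`
and `H` are isomorphic; (c) every isomorphism `P(G) → P(H)` is an isomorphism of
directed power graphs. -/
theorem stmt_12 (G H : Type*) [Group G] [Group H] [Countable G]
    (htf : ∀ g : G, g ≠ 1 → ¬ IsOfFinOrder g)
    (hnc : ¬ IsCyclic G)
    (hG : ∀ g : G, g ≠ 1 → ∃! C : Subgroup G, IsMaxCyclic C ∧ g ∈ C)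
    (h : Nonempty (powerGraph G ≃g powerGraph H)) :
    (∀ x : H, x ≠ 1 → ∃! C : Subgroup H, IsMaxCyclic C ∧ x ∈ C) ∧
      (∃ e : G ≃ H, ∀ x y : G, powArc x y ↔ powArc (e x) (e y)) ∧
      (∀ (f : powerGraph G ≃g powerGraph H) (x y : G),
        powArc x y ↔ powArc (f x) (f y)) := by
  obtain ⟨f₀⟩ := h
  -- the image of 1 is isolated, hence equals 1, hence H is torsion-free
  have hiso1 : ∀ w, ¬ (powerGraph H).Adj (f₀ 1) w := by
    intro w hw
    have hw' : (powerGraph H).Adj (f₀ 1) (f₀ (f₀.symm w)) := by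
      rwa [f₀.apply_symm_apply]
    exact adj_one_left htf (f₀.symm w) (f₀.map_adj_iff.mp hw')
  have hf01 : f₀ 1 = 1 := isolated_eq_one hiso1
  have htfH : ∀ t : H, t ≠ 1 → ¬ IsOfFinOrder t := by
    intro t ht hfin
    obtain ⟨n, hn, hpow⟩ := isOfFinOrder_iff_pow_eq_one.mp hfin
    apply hiso1 t
    rw [hf01]
    refine ⟨Ne.symm ht, (n : ℤ), by exact_mod_cast hn.ne', Or.inr ?_⟩
    rw [zpow_natCast, hpow]
  -- part (c): every graph isomorphism preserves arcs
  have main : ∀ (f : powerGraph G ≃g powerGraph H) (x y : G),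
      powArc x y ↔ powArc (f x) (f y) := by
    intro f x y
    constructor
    · intro hxy
      exact pcond_powArc htfH ((pcond_map f x y).mp (powArc_pcond htf hG hxy))
    · intro harc'
      have hadjxy : (powerGraph G).Adj x y := f.map_adj_iff.mp (powArc_adj harc')
      by_contra hno
      obtain ⟨hne, n, hn, hc | hc⟩ := hadjxy
      · exact hno ⟨hne, n, hn, hc⟩
      have h1 : powArc y x := ⟨Ne.symm hne, n, hn, hc⟩
      have h2 : powArc (f y) (f x) :=
        pcond_powArc htfH ((pcond_map f y x).mp (powArc_pcond htf hG h1))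
      have hinv : f y = (f x)⁻¹ := both_arcs_inv htfH harc' h2
      have h3 : PCond (f x) (f y) := pcond_of_inv (powArc_adj harc') hinv
      exact hno (pcond_powArc htf ((pcond_map f x y).mpr h3))
  -- the underlying equivalence of f₀
  set e : G ≃ H := f₀.toEquiv with he
  have harcE : ∀ x y : G, powArc x y ↔ powArc (e x) (e y) := main f₀
  have he1 : e 1 = 1 := hf01
  have he1' : e.symm 1 = 1 := by rw [← he1, e.symm_apply_apply]
  have harcE' : ∀ u v : H, powArc u v ↔ powArc (e.symm u) (e.symm v) := by
    intro u v
    conv_lhs => rw [← e.apply_symm_apply u, ← e.apply_symm_apply v]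
    exact (harcE _ _).symm
  have harcE'' : ∀ x y : G, powArc x y ↔ powArc (e.symm.symm x) (e.symm.symm y) := by
    intro x y; rw [Equiv.symm_symm]; exact harcE x y
  refine ⟨?_, ⟨e, harcE⟩, main⟩
  -- part (a)
  intro x hx
  have hg1 : e.symm x ≠ 1 := by
    intro hgg
    exact hx (by rw [← e.apply_symm_apply x, hgg, he1])
  obtain ⟨C, ⟨hCmax, hgC⟩, huniq⟩ := hG (e.symm x) hg1
  obtain ⟨c, rfl⟩ := cyclic_gen hCmax.1
  have hc1 : c ≠ 1 := by
    rintro rfl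
    obtain ⟨k, hk⟩ := Subgroup.mem_zpowers_iff.mp hgC
    rw [one_zpow] at hk
    exact hg1 hk.symm
  refine ⟨Subgroup.zpowers (e c),
    ⟨maxcyclic_map e harcE harcE' he1 hc1 hCmax, ?_⟩, ?_⟩
  · have hmem : e (e.symm x) ∈ (Subgroup.zpowers (e c) : Set H) := by
      rw [← zpowers_image e harcE he1 hc1]; exact ⟨e.symm x, hgC, rfl⟩
    rwa [e.apply_symm_apply] at hmem
  · rintro D ⟨hDmax, hxD⟩
    obtain ⟨d, rfl⟩ := cyclic_gen hDmax.1
    have hd1 : d ≠ 1 := by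
      rintro rfl
      obtain ⟨k, hk⟩ := Subgroup.mem_zpowers_iff.mp hxD
      rw [one_zpow] at hk
      exact hx hk.symm
    have hsd1 : e.symm d ≠ 1 := by
      intro hh
      exact hd1 (by rw [← e.apply_symm_apply d, hh, he1])
    have hCd : IsMaxCyclic (Subgroup.zpowers (e.symm d)) :=
      maxcyclic_map e.symm harcE' harcE'' he1' hd1 hDmax
    have hgD : e.symm x ∈ Subgroup.zpowers (e.symm d) := by
      have hx3 : e.symm x ∈ ⇑e.symm '' (Subgroup.zpowers d : Set H) := ⟨x, hxD, rfl⟩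
      rwa [zpowers_image e.symm harcE' he1' hd1] at hx3
    have hCeq : Subgroup.zpowers (e.symm d) = Subgroup.zpowers c :=
      huniq _ ⟨hCd, hgD⟩
    apply SetLike.coe_injective
    calc (Subgroup.zpowers d : Set H)
        = (Subgroup.zpowers (e (e.symm d)) : Set H) := by rw [e.apply_symm_apply]
      _ = ⇑e '' (Subgroup.zpowers (e.symm d) : Set G) :=
          (zpowers_image e harcE he1 hsd1).symm
      _ = ⇑e '' (Subgroup.zpowers c : Set G) := by rw [hCeq]
      _ = (Subgroup.zpowers (e c) : Set H) := zpowers_image e harcE he1 hc1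
end

section
/- Let G be a torsion-free group of nilpotency class at most 2 such that the subgraph of the power graph P(G) induced on the non-identity elements of G is connected, and let H be a group of nilpotency class at most 2. If P(G) is isomorphic to P(H), then the directed power graphs of G and H are isomorphic. -/
namespace PG18

/-- torsion-free -/
abbrev TF (G : Type*) [Group G] : Prop := ∀ g : G, g ≠ 1 → ¬ IsOfFinOrder g

variable {G : Type*} [Group G]

lemma adj_iff {x y : G} :
    (powerGraph G).Adj x y ↔ x ≠ y ∧ ∃ n : ℤ, n ≠ 0 ∧ (y = x ^ n ∨ x = y ^ n) := Iff.rfl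

lemma zpow_zero_of (htf : TF G) {x : G} {n : ℤ} (hx : x ≠ 1) (h : x ^ n = 1) : n = 0 := by
  by_contra hn
  refine htf x hx (isOfFinOrder_iff_pow_eq_one.mpr ⟨n.natAbs, Int.natAbs_pos.mpr hn, ?_⟩)
  rcases Int.natAbs_eq n with h' | h'
  · rw [← zpow_natCast, ← h', h]
  · rw [← zpow_natCast]
    have : x ^ (-(n.natAbs : ℤ)) = 1 := by rw [← h', h]
    rw [zpow_neg] at this
    exact inv_injective (by rw [this, inv_one])

lemma zpow_inj (htf : TF G) {x : G} (hx : x ≠ 1) {a b : ℤ} (h : x ^ a = x ^ b) : a = b := by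
  have h1 : x ^ (a - b) = 1 := by
    rw [zpow_sub, h, mul_inv_cancel]
  have := zpow_zero_of htf hx h1
  omega

lemma zpow_ne_one (htf : TF G) {x : G} (hx : x ≠ 1) {n : ℤ} (hn : n ≠ 0) : x ^ n ≠ 1 := by
  intro h; exact hn (zpow_zero_of htf hx h)

lemma not_adj_one (htf : TF G) (y : G) : ¬ (powerGraph G).Adj y 1 := by
  rintro ⟨hne, n, hn, h | h⟩
  · rcases zpow_zero_of htf (fun hy => hne (by rw [hy]) : y ≠ 1) h.symm with h'
    exact hn h'
  · exact hne (by rw [h, one_zpow])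

lemma not_one_adj (htf : TF G) (y : G) : ¬ (powerGraph G).Adj 1 y := by
  intro h; exact not_adj_one htf y h.symm

open scoped commutatorElement in
/-- in class ≤ 2, torsion-free: commuting with a nonzero power implies commuting -/
lemma commute_of_zpow (htf : TF G) (hnil : commutator G ≤ Subgroup.center G)
    {z x : G} {n : ℤ} (hn : n ≠ 0) (h : Commute z (x ^ n)) : Commute z x := by
  set c : G := ⁅z, x⁆ with hc
  have hcen : c ∈ Subgroup.center G :=
    hnil (Subgroup.commutator_mem_commutator (Subgroup.mem_top z) (Subgroup.mem_top x))
  have hcx : Commute c x := (Subgroup.mem_center_iff.mp hcen x).symm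
  have hconj : z * x * z⁻¹ = c * x := by
    simp only [hc, commutatorElement_def]
    group
  have hconjn : z * x ^ n * z⁻¹ = (c * x) ^ n := by
    rw [← hconj]
    rw [show z * x * z⁻¹ = (MulAut.conj z) x from rfl, ← map_zpow]
    rfl
  have hzn : z * x ^ n * z⁻¹ = x ^ n := by
    rw [h.eq, mul_assoc, mul_inv_cancel, mul_one]
  have hcn : c ^ n * x ^ n = x ^ n := by
    rw [← hcx.mul_zpow, ← hconjn, hzn]
  have hc1 : c ^ n = 1 := by
    have := mul_right_cancel (b := x ^ n) (by rw [hcn, one_mul] : c ^ n * x ^ n = 1 * x ^ n)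
    exact this
  by_cases hceq : c = 1
  · exact commutatorElement_eq_one_iff_commute.mp hceq
  · exact absurd (zpow_zero_of htf hceq hc1) hn

section Walks

/-- adjacency commute-transfer along walks: the whole group is abelian -/
lemma comm_all (htf : TF G) (hnil : commutator G ≤ Subgroup.center G)
    (hconn : ((powerGraph G).induce {g : G | g ≠ 1}).Connected) :
    ∀ x y : G, Commute x y := by
  have key : ∀ (u v : {g : G | g ≠ 1}),
      (((powerGraph G).induce {g : G | g ≠ 1}).Walk u v) → Commute (u : G) (v : G) := by
    intro u v w
    induction w with
    | nil => exact Commute.refl _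
    | @cons u u' v h p ih =>
      have hadj : (powerGraph G).Adj (u : G) (u' : G) := h
      rcases hadj with ⟨hne, n, hn, hcase | hcase⟩
      · -- u' = u ^ n
        have : Commute (v : G) ((u : G) ^ n) := by rw [← hcase]; exact ih.symm
        exact (commute_of_zpow htf hnil hn this).symm
      · -- u = u' ^ n
        have : Commute ((u' : G) ^ n) (v : G) := Commute.zpow_left ih n
        rw [← hcase] at this
        exact this
  intro x y
  by_cases hx : x = 1
  · rw [hx]; exact Commute.one_left y
  by_cases hy : y = 1
  · rw [hy]; exact Commute.one_right x
  have hr := hconn.preconnected ⟨x, hx⟩ ⟨y, hy⟩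
  exact key _ _ hr.some

/-- any two nontrivial elements are dependent -/
lemma dep_all (hconn : ((powerGraph G).induce {g : G | g ≠ 1}).Connected) :
    ∀ x y : G, x ≠ 1 → y ≠ 1 → ∃ a b : ℤ, a ≠ 0 ∧ b ≠ 0 ∧ x ^ a = y ^ b := by
  have key : ∀ (u v : {g : G | g ≠ 1}),
      (((powerGraph G).induce {g : G | g ≠ 1}).Walk u v) →
      ∃ a b : ℤ, a ≠ 0 ∧ b ≠ 0 ∧ (u : G) ^ a = (v : G) ^ b := by
    intro u v w
    induction w with
    | nil => exact ⟨1, 1, one_ne_zero, one_ne_zero, rfl⟩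
    | @cons u u' v h p ih =>
      obtain ⟨a, b, ha, hb, hab⟩ := ih
      have hadj : (powerGraph G).Adj (u : G) (u' : G) := h
      rcases hadj with ⟨hne, n, hn, hcase | hcase⟩
      · -- u' = u ^ n : u^(n*a) = u'^a = v^b
        refine ⟨n * a, b, mul_ne_zero hn ha, hb, ?_⟩
        rw [zpow_mul, ← hcase, hab]
      · -- u = u' ^ n : u^a = u'^(n*a) = (u'^a)^n = (v^b)^n = v^(b*n)
        refine ⟨a, b * n, ha, mul_ne_zero hb hn, ?_⟩
        rw [hcase, ← zpow_mul, mul_comm n a, zpow_mul, hab, ← zpow_mul, mul_comm b n,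
          mul_comm n b]
  intro x y hx hy
  exact key ⟨x, hx⟩ ⟨y, hy⟩ (hconn.preconnected ⟨x, hx⟩ ⟨y, hy⟩).some

end Walks

/-- uniqueness of roots in torsion-free abelian setting -/
lemma uniq_pow (htf : TF G) (hcomm : ∀ a b : G, Commute a b)
    {x y : G} {a : ℤ} (ha : a ≠ 0) (h : x ^ a = y ^ a) : x = y := by
  have h1 : (x * y⁻¹) ^ a = 1 := by
    rw [(hcomm x y⁻¹).mul_zpow, h, inv_zpow, mul_inv_cancel]
  by_cases hxy : x * y⁻¹ = 1
  · exact mul_inv_eq_one.mp hxy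
  · exact absurd (zpow_zero_of htf hxy h1) ha

section Twin

/-- helper: if `y = x ^ (2c)` with matching neighbourhoods, contradiction -/
lemma caseI (htf : TF G) {x y : G} (hx : x ≠ 1) {c : ℤ} (hc : c ≠ 0)
    (hyx : y = x ^ (2 * c))
    (hT : ∀ z : G, z ≠ x → z ≠ y → ((powerGraph G).Adj x z ↔ (powerGraph G).Adj y z)) :
    False := by
  set z : G := x ^ (4 * c + 1) with hz
  have hzx : z ≠ x := by
    intro h
    have := zpow_inj htf hx (a := 4 * c + 1) (b := 1) (by rw [← hz, zpow_one]; exact h)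
    omega
  have hzy : z ≠ y := by
    intro h
    have := zpow_inj htf hx (a := 4 * c + 1) (b := 2 * c) (by rw [← hz, ← hyx]; exact h)
    omega
  have hadj : (powerGraph G).Adj x z := ⟨hzx.symm, 4 * c + 1, by omega, Or.inl rfl⟩
  have hady : (powerGraph G).Adj y z := (hT z hzx hzy).mp hadj
  rcases hady with ⟨-, n, hn, hcase | hcase⟩
  · -- z = y ^ n : 4c+1 = 2cn
    have heq : (4 * c + 1 : ℤ) = 2 * c * n :=
      zpow_inj htf hx (by rw [← hz, hcase, hyx, ← zpow_mul])
    obtain ⟨k, hk⟩ : ∃ k : ℤ, 4 * c + 1 = 2 * k := ⟨c * n, by rw [heq]; ring⟩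
    omega
  · -- y = z ^ n : 2c = (4c+1)n
    have h2 : (2 * c : ℤ) = (4 * c + 1) * n :=
      zpow_inj htf hx (by rw [← hyx, hcase, hz, ← zpow_mul])
    have hdvd : (4 * c + 1 : ℤ) ∣ 2 * c := ⟨n, h2⟩
    have hdvd2 : (4 * c + 1 : ℤ) ∣ 1 := by
      have h3 : (4 * c + 1 : ℤ) ∣ 2 * (2 * c) - (4 * c + 1) := by
        exact dvd_sub (hdvd.mul_left 2) dvd_rfl
      have : (2 * (2 * c) - (4 * c + 1) : ℤ) = -1 := by ring
      rw [this] at h3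
      exact (dvd_neg.mp h3)
    have := Int.isUnit_iff.mp (isUnit_of_dvd_one hdvd2)
    omega

/-- twin lemma: equal "neighbourhoods away from the pair" forces inverse pair -/
lemma twin (htf : TF G) (hcomm : ∀ a b : G, Commute a b)
    {x y : G} (hx : x ≠ 1) (hy : y ≠ 1)
    (hT : ∀ z : G, z ≠ x → z ≠ y → ((powerGraph G).Adj x z ↔ (powerGraph G).Adj y z)) :
    y = x ∨ y = x⁻¹ := by
  by_cases hxy : y = x
  · exact Or.inl hxy
  by_cases hxyi : y = x⁻¹
  · exact Or.inr hxyi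
  exfalso
  have hT' : ∀ z : G, z ≠ y → z ≠ x → ((powerGraph G).Adj y z ↔ (powerGraph G).Adj x z) :=
    fun z h1 h2 => (hT z h2 h1).symm
  -- step 1: y is not x^2
  by_cases hyx2 : y = x ^ (2:ℤ)
  · exact caseI htf hx one_ne_zero (by rw [hyx2]; norm_num) hT
  -- x^2 ≠ x
  have hx2x : x ^ (2:ℤ) ≠ x := by
    intro h
    have := zpow_inj htf hx (a := 2) (b := 1) (by rw [zpow_one]; exact h)
    omega
  have hadjx2 : (powerGraph G).Adj x (x ^ (2:ℤ)) := ⟨hx2x.symm, 2, two_ne_zero, Or.inl rfl⟩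
  have hady2 : (powerGraph G).Adj y (x ^ (2:ℤ)) :=
    (hT _ hx2x (fun h => hyx2 h.symm)).mp hadjx2
  rcases hady2 with ⟨-, a, ha0, hA | hA⟩
  swap
  · -- y = (x^2)^a = x^(2a)
    exact caseI htf hx ha0 (by rw [hA, ← zpow_mul]) hT
  -- hA : x^2 = y^a.  Now look at y^2.
  by_cases hxy2 : x = y ^ (2:ℤ)
  · exact caseI htf hy one_ne_zero (by rw [hxy2]; norm_num) hT'
  have hy2y : y ^ (2:ℤ) ≠ y := by
    intro h
    have := zpow_inj htf hy (a := 2) (b := 1) (by rw [zpow_one]; exact h)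
    omega
  have hadjy2 : (powerGraph G).Adj y (y ^ (2:ℤ)) := ⟨hy2y.symm, 2, two_ne_zero, Or.inl rfl⟩
  have hadx2 : (powerGraph G).Adj x (y ^ (2:ℤ)) :=
    (hT' _ hy2y (fun h => hxy2 h.symm)).mp hadjy2
  rcases hadx2 with ⟨-, b, hb0, hB | hB⟩
  swap
  · -- x = (y^2)^b = y^(2b)
    exact caseI htf hy hb0 (by rw [hB, ← zpow_mul]) hT'
  -- hB : y^2 = x^b.  Then x^4 = x^(b*a), so 4 = b*a.
  have h4 : x ^ (4:ℤ) = x ^ (b * a) := by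
    have : x ^ (4:ℤ) = (x ^ (2:ℤ)) ^ (2:ℤ) := by rw [← zpow_mul]; norm_num
    rw [this, hA, ← zpow_mul, mul_comm a 2, zpow_mul, hB, ← zpow_mul]
  have hba : b * a = 4 := (zpow_inj htf hx h4).symm
  -- case analysis on |a|,|b|
  have hna : a.natAbs * b.natAbs = 4 := by
    rw [← Int.natAbs_mul, mul_comm a b, hba]; rfl
  have hA1 : a ≠ 1 := by
    intro h; rw [h, zpow_one] at hA; exact hyx2 hA.symm
  have hAm1 : a ≠ -1 := by
    intro h
    rw [h] at hA
    -- x^2 = y⁻¹, so y = x^(-2)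
    have hgoal : y = x ^ (2 * (-1) : ℤ) := by
      rw [zpow_mul, hA]; group
    exact caseI htf hx (by norm_num) hgoal hT
  have hB1 : b ≠ 1 := by
    intro h; rw [h, zpow_one] at hB; exact hxy2 hB.symm
  have hBm1 : b ≠ -1 := by
    intro h
    rw [h] at hB
    have hgoal : x = y ^ (2 * (-1) : ℤ) := by
      rw [zpow_mul, hB]; group
    exact caseI htf hy (by norm_num) hgoal hT'
  -- so |a| = |b| = 2
  have hna2 : a.natAbs = 2 := by
    have h1 : a.natAbs ≠ 1 := by
      intro h
      rcases Int.natAbs_eq a with h' | h' <;> rw [h] at h' <;> push_cast at h' <;> omega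
    have h2 : b.natAbs ≠ 1 := by
      intro h
      rcases Int.natAbs_eq b with h' | h' <;> rw [h] at h' <;> push_cast at h' <;> omega
    have hle : a.natAbs ≤ 4 := Nat.le_of_dvd (by norm_num) ⟨b.natAbs, hna.symm⟩
    interval_cases h : a.natAbs <;> omega
  -- a = ±2 : x^2 = (y^(±1))^2
  have ha2 : a = 2 ∨ a = -2 := by
    rcases Int.natAbs_eq a with h' | h' <;> rw [hna2] at h' <;> omega
  have : ∃ s : ℤ, (s = 1 ∨ s = -1) ∧ x ^ (2:ℤ) = (y ^ s) ^ (2:ℤ) := by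
    rcases ha2 with h | h
    · exact ⟨1, Or.inl rfl, by rw [hA, h, zpow_one]⟩
    · exact ⟨-1, Or.inr rfl, by rw [hA, h, ← zpow_mul]; norm_num⟩
  obtain ⟨s, hs, hxy2eq⟩ := this
  have := uniq_pow htf hcomm (two_ne_zero) hxy2eq
  rcases hs with h | h
  · rw [h, zpow_one] at this; exact hxy (this.symm)
  · rw [h, zpow_neg_one] at this
    exact hxyi (by rw [this, inv_inv])

end Twin

lemma adj_inv_iff {u z : G} (h1 : z ≠ u) (h2 : z ≠ u⁻¹) :
    (powerGraph G).Adj u⁻¹ z ↔ (powerGraph G).Adj u z := by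
  have key : ∀ w : G, ∀ n : ℤ, (z = w ^ n → z = w⁻¹ ^ (-n)) ∧ (w = z ^ n → w⁻¹ = z ^ (-n)) := by
    intro w n
    constructor
    · intro h; rw [h, inv_zpow, ← zpow_neg, neg_neg]
    · intro h; rw [h, ← zpow_neg]
  constructor
  · rintro ⟨-, n, hn, h | h⟩
    · refine ⟨h1.symm, -n, neg_ne_zero.mpr hn, Or.inl ?_⟩
      have := (key u⁻¹ n).1 h
      rwa [inv_inv] at this
    · refine ⟨h1.symm, -n, neg_ne_zero.mpr hn, Or.inr ?_⟩
      have := (key u⁻¹ n).2 h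
      rwa [inv_inv] at this
  · rintro ⟨-, n, hn, h | h⟩
    · exact ⟨fun hh => h2 hh.symm, -n, neg_ne_zero.mpr hn, Or.inl ((key u n).1 h)⟩
    · exact ⟨fun hh => h2 hh.symm, -n, neg_ne_zero.mpr hn, Or.inr ((key u n).2 h)⟩

lemma inv_ne_self (htf : TF G) {x : G} (hx : x ≠ 1) : x⁻¹ ≠ x := by
  intro h
  have hxx : x * x = 1 := by nth_rewrite 1 [← h]; exact inv_mul_cancel x
  have h2 : x ^ (2:ℤ) = 1 := by rw [show (2:ℤ) = 1 + 1 from rfl, zpow_add, zpow_one, hxx]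
  have := zpow_zero_of htf hx h2
  norm_num at this

section Iso

variable {H : Type*} [Group H]

lemma iso_one (f : powerGraph G ≃g powerGraph H) (htfG : TF G) : f 1 = 1 := by
  by_contra h1
  have hsq : (f 1 : H) ^ (2:ℤ) ≠ f 1 := by
    intro h
    have h' : (f 1 : H) * f 1 = f 1 * 1 := by
      have h2 : (f 1 : H) ^ (2:ℤ) = f 1 * f 1 := by
        rw [show (2:ℤ) = 1 + 1 from rfl, zpow_add, zpow_one]
      rw [mul_one, ← h2, h]
    exact h1 (mul_left_cancel h')
  have hadj : (powerGraph H).Adj (f 1) ((f 1) ^ (2:ℤ)) := ⟨hsq.symm, 2, two_ne_zero, Or.inl rfl⟩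
  have heq : (f 1 : H) ^ (2:ℤ) = f (f.symm ((f 1) ^ (2:ℤ))) := (f.apply_symm_apply _).symm
  rw [heq] at hadj
  exact not_one_adj htfG _ (f.map_rel_iff.mp hadj)

lemma tf_trans (f : powerGraph G ≃g powerGraph H) (htfG : TF G) : TF H := by
  intro g hg hfin
  obtain ⟨n, hn, hgn⟩ := isOfFinOrder_iff_pow_eq_one.mp hfin
  have hadj : (powerGraph H).Adj g 1 := by
    refine ⟨hg, (n : ℤ), by exact_mod_cast hn.ne', Or.inl ?_⟩
    rw [zpow_natCast, hgn]
  have hf1 : f.symm 1 = 1 := by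
    have := iso_one f htfG
    rw [← this, f.symm_apply_apply]
  have : (powerGraph G).Adj (f.symm g) (f.symm 1) := f.symm.map_rel_iff.mpr hadj
  rw [hf1] at this
  exact not_adj_one htfG _ this

lemma symm_one (f : powerGraph G ≃g powerGraph H) (htfG : TF G) : f.symm 1 = 1 := by
  have := iso_one f htfG
  rw [← this, f.symm_apply_apply]

lemma ne_one_push (f : powerGraph G ≃g powerGraph H) (htfG : TF G) {x : G} (hx : x ≠ 1) :
    f x ≠ 1 := by
  intro h
  exact hx (f.injective (by rw [h, iso_one f htfG]))

lemma conn_trans (f : powerGraph G ≃g powerGraph H) (htfG : TF G)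
    (hconn : ((powerGraph G).induce {g : G | g ≠ 1}).Connected) :
    ((powerGraph H).induce {h : H | h ≠ 1}).Connected := by
  rw [SimpleGraph.connected_iff]
  let φ : ((powerGraph G).induce {g : G | g ≠ 1}) →g ((powerGraph H).induce {h : H | h ≠ 1}) :=
    { toFun := fun u => ⟨f u.1, ne_one_push f htfG u.2⟩,
      map_rel' := fun {u v} h => f.map_rel_iff.mpr h }
  refine ⟨?_, ?_⟩
  · intro u v
    have h1 : (f.symm u.1 : G) ≠ 1 := by
      intro h
      exact u.2 (by rw [← f.apply_symm_apply u.1, h, iso_one f htfG])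
    have h2 : (f.symm v.1 : G) ≠ 1 := by
      intro h
      exact v.2 (by rw [← f.apply_symm_apply v.1, h, iso_one f htfG])
    have hr := (hconn.preconnected ⟨f.symm u.1, h1⟩ ⟨f.symm v.1, h2⟩).map φ
    have e1 : φ ⟨f.symm u.1, h1⟩ = u := Subtype.ext (f.apply_symm_apply u.1)
    have e2 : φ ⟨f.symm v.1, h2⟩ = v := Subtype.ext (f.apply_symm_apply v.1)
    rwa [e1, e2] at hr
  · obtain ⟨u⟩ := hconn.nonempty
    exact ⟨φ u⟩

/-- the isomorphism sends inverses to inverses -/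
lemma inv_push (f : powerGraph G ≃g powerGraph H) (htfG : TF G)
    (hcommH : ∀ a b : H, Commute a b) {x : G} (hx : x ≠ 1) :
    f x⁻¹ = (f x)⁻¹ := by
  have htfH : TF H := tf_trans f htfG
  set u : H := f x with hu
  set w : H := f x⁻¹ with hw
  have hxinv : x⁻¹ ≠ x := inv_ne_self htfG hx
  have hu1 : u ≠ 1 := ne_one_push f htfG hx
  have hui1 : u⁻¹ ≠ 1 := fun h => hu1 (by rw [← inv_inv u, h, inv_one])
  have hw1 : w ≠ 1 := ne_one_push f htfG (fun h => hx (by rw [← inv_inv x, h, inv_one]))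
  have huiu : u⁻¹ ≠ u := inv_ne_self htfH hu1
  have hwu : w ≠ u := fun h => hxinv (f.injective h)
  have hT : ∀ z : H, z ≠ u⁻¹ → z ≠ w → ((powerGraph H).Adj u⁻¹ z ↔ (powerGraph H).Adj w z) := by
    intro z hz1 hz2
    by_cases hzu : z = u
    · subst hzu
      constructor
      · intro _
        have : (powerGraph G).Adj x⁻¹ x :=
          ⟨hxinv, -1, by norm_num, Or.inr (by rw [zpow_neg_one])⟩
        exact f.map_rel_iff.mpr this
      · intro _
        exact ⟨huiu, -1, by norm_num, Or.inr (by rw [zpow_neg_one])⟩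
    -- z ∉ {u, u⁻¹, w}
    have step1 : (powerGraph H).Adj u⁻¹ z ↔ (powerGraph H).Adj u z := adj_inv_iff hzu hz1
    have hsymz : (f.symm z : G) ≠ x := by
      intro h; exact hzu (by rw [← f.apply_symm_apply z, h])
    have hsymzi : (f.symm z : G) ≠ x⁻¹ := by
      intro h; exact hz2 (by rw [← f.apply_symm_apply z, h])
    have step2 : (powerGraph H).Adj u z ↔ (powerGraph G).Adj x (f.symm z) := by
      rw [hu, ← f.apply_symm_apply z, f.map_rel_iff]
      rw [f.apply_symm_apply]
    have step3 : (powerGraph G).Adj x (f.symm z) ↔ (powerGraph G).Adj x⁻¹ (f.symm z) :=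
      (adj_inv_iff hsymz hsymzi).symm
    have step4 : (powerGraph G).Adj x⁻¹ (f.symm z) ↔ (powerGraph H).Adj w z := by
      rw [hw, ← f.apply_symm_apply z, f.map_rel_iff]
      rw [f.apply_symm_apply]
    rw [step1, step2, step3, step4]
  rcases twin htfH hcommH hui1 hw1 hT with h | h
  · rw [h]
  · rw [inv_inv] at h
    exact absurd (f.injective (hw ▸ hu ▸ h : f x⁻¹ = f x)) hxinv

lemma pull (f : powerGraph G ≃g powerGraph H) (htfG : TF G) {x y : G}
    (hy : y ≠ 1) (h : ∃ n : ℤ, f y = (f x) ^ n) : ∃ n : ℤ, y = x ^ n ∨ x = y ^ n := by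
  obtain ⟨n, hn⟩ := h
  by_cases hxy : x = y
  · exact ⟨1, Or.inl (by rw [hxy, zpow_one])⟩
  have hfy1 : f y ≠ 1 := ne_one_push f htfG hy
  have hn0 : n ≠ 0 := fun h0 => hfy1 (by rw [hn, h0, zpow_zero])
  have hadj : (powerGraph H).Adj (f x) (f y) :=
    ⟨fun h' => hxy (f.injective h'), n, hn0, Or.inl hn⟩
  rcases f.map_rel_iff.mp hadj with ⟨-, m, hm, hcase⟩
  exact ⟨m, hcase⟩

/-- comparability of x and x^j pushes forward -/
lemma comp2 (f : powerGraph G ≃g powerGraph H) (htfG : TF G) {x : G} (hx : x ≠ 1)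
    {j : ℤ} (hj0 : j ≠ 0) (hj1 : j ≠ 1) :
    (∃ n : ℤ, f (x ^ j) = (f x) ^ n) ∨ (∃ n : ℤ, f x = (f (x ^ j)) ^ n) := by
  have hne : x ^ j ≠ x := by
    intro h
    exact hj1 (zpow_inj htfG hx (by rw [h, zpow_one]))
  have hadj : (powerGraph G).Adj x (x ^ j) := ⟨hne.symm, j, hj0, Or.inl rfl⟩
  rcases f.map_rel_iff.mpr hadj with ⟨-, n, hn, hcase | hcase⟩
  · exact Or.inl ⟨n, hcase⟩
  · exact Or.inr ⟨n, hcase⟩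

lemma arith2r {r : ℕ} (hr : r.Prime) (h3 : 3 ≤ r) (m : ℤ)
    (h : (2:ℤ) = r * m ∨ (r:ℤ) = 2 * m) : False := by
  rcases h with h | h
  · have hdvd : (r:ℤ) ∣ 2 := ⟨m, h⟩
    have : r ∣ 2 := by exact_mod_cast hdvd
    have := Nat.le_of_dvd (by norm_num) this
    omega
  · have hdvd : (2:ℤ) ∣ (r:ℤ) := ⟨m, h⟩
    have h2 : 2 ∣ r := by exact_mod_cast hdvd
    rcases (Nat.Prime.eq_one_or_self_of_dvd hr 2 h2) with h' | h' <;> omega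

lemma arithkr {k : ℤ} (hk : 2 ≤ k.natAbs) {r : ℕ} (hr : r.Prime) (hgt : k.natAbs < r) (m : ℤ)
    (h : k = (r:ℤ) * m ∨ (r:ℤ) = k * m) : False := by
  rcases h with h | h
  · have hdvd : (r:ℤ) ∣ k := ⟨m, h⟩
    have hnat : r ∣ k.natAbs := by
      rcases Int.natAbs_eq k with h' | h'
      · exact Int.natCast_dvd_natCast.mp (by rwa [← h'])
      · exact Int.natCast_dvd_natCast.mp (by rw [h'] at hdvd; exact dvd_neg.mp hdvd)
    have := Nat.le_of_dvd (by omega) hnat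
    omega
  · have hdvd : k ∣ (r:ℤ) := ⟨m, h⟩
    have hnat : k.natAbs ∣ r := by
      rcases Int.natAbs_eq k with h' | h'
      · exact Int.natCast_dvd_natCast.mp (by rwa [h'] at hdvd)
      · refine Int.natCast_dvd_natCast.mp ?_
        rw [h'] at hdvd; exact (neg_dvd.mp hdvd)
    rcases (Nat.Prime.eq_one_or_self_of_dvd hr _ hnat) with h' | h' <;> omega

lemma K3pos (f : powerGraph G ≃g powerGraph H) (htfG : TF G) {x : G} (hx : x ≠ 1)
    (hs : ∃ n : ℤ, f (x ^ (2:ℤ)) = (f x) ^ n)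
    {k : ℤ} (hk0 : k ≠ 0) (hk1 : k ≠ 1) (hkm : k ≠ -1) :
    ∃ n : ℤ, f (x ^ k) = (f x) ^ n := by
  have hknat : 2 ≤ k.natAbs := by
    rcases Int.natAbs_eq k with h' | h' <;> omega
  obtain ⟨r, hrge, hrp⟩ := Nat.exists_infinite_primes (k.natAbs + 3)
  have hr3 : 3 ≤ r := by omega
  have hrgt : k.natAbs < r := by omega
  have hxr1 : x ^ (r:ℤ) ≠ 1 := zpow_ne_one htfG hx (by exact_mod_cast hrp.ne_zero)
  have hx21 : x ^ (2:ℤ) ≠ 1 := zpow_ne_one htfG hx two_ne_zero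
  have hxk1 : x ^ k ≠ 1 := zpow_ne_one htfG hx hk0
  -- claim 1 : x ≺ x^r
  have claim1 : ∃ n : ℤ, f (x ^ (r:ℤ)) = (f x) ^ n := by
    rcases comp2 f htfG hx (j := (r:ℤ)) (by exact_mod_cast hrp.ne_zero)
        (by exact_mod_cast (by omega : r ≠ 1)) with h | h
    · exact h
    exfalso
    obtain ⟨t, ht⟩ := h
    obtain ⟨s, hss⟩ := hs
    -- f (x^2) = (f (x^r)) ^ (t*s)
    have hcomb : ∃ n : ℤ, f (x ^ (2:ℤ)) = (f (x ^ (r:ℤ))) ^ n := by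
      refine ⟨t * s, ?_⟩
      rw [hss, ht, ← zpow_mul]
    obtain ⟨m, hm | hm⟩ := pull f htfG hx21 hcomb
    · exact arith2r hrp hr3 m (Or.inl (zpow_inj htfG hx (by rw [hm, ← zpow_mul])))
    · exact arith2r hrp hr3 m (Or.inr (zpow_inj htfG hx (by rw [hm, ← zpow_mul])))
  -- claim 2 : direction of x vs x^k cannot be downward
  rcases comp2 f htfG hx hk0 hk1 with h | h
  · exact h
  exfalso
  obtain ⟨t, ht⟩ := h
  obtain ⟨s, hss⟩ := claim1
  have hcomb : ∃ n : ℤ, f (x ^ (r:ℤ)) = (f (x ^ k)) ^ n := ⟨t * s, by rw [hss, ht, ← zpow_mul]⟩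
  obtain ⟨m, hm | hm⟩ := pull f htfG hxr1 hcomb
  · exact arithkr hknat hrp hrgt m (Or.inr (zpow_inj htfG hx (by rw [hm, ← zpow_mul])))
  · exact arithkr hknat hrp hrgt m (Or.inl (zpow_inj htfG hx (by rw [hm, ← zpow_mul])))

lemma K3neg (f : powerGraph G ≃g powerGraph H) (htfG : TF G) {x : G} (hx : x ≠ 1)
    (hs : ∃ n : ℤ, f x = (f (x ^ (2:ℤ))) ^ n)
    {k : ℤ} (hk0 : k ≠ 0) (hk1 : k ≠ 1) (hkm : k ≠ -1) :
    ∃ n : ℤ, f x = (f (x ^ k)) ^ n := by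
  have hknat : 2 ≤ k.natAbs := by
    rcases Int.natAbs_eq k with h' | h' <;> omega
  obtain ⟨r, hrge, hrp⟩ := Nat.exists_infinite_primes (k.natAbs + 3)
  have hr3 : 3 ≤ r := by omega
  have hrgt : k.natAbs < r := by omega
  have hxr1 : x ^ (r:ℤ) ≠ 1 := zpow_ne_one htfG hx (by exact_mod_cast hrp.ne_zero)
  have hx21 : x ^ (2:ℤ) ≠ 1 := zpow_ne_one htfG hx two_ne_zero
  have hxk1 : x ^ k ≠ 1 := zpow_ne_one htfG hx hk0
  have claim1 : ∃ n : ℤ, f x = (f (x ^ (r:ℤ))) ^ n := by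
    rcases comp2 f htfG hx (j := (r:ℤ)) (by exact_mod_cast hrp.ne_zero)
        (by exact_mod_cast (by omega : r ≠ 1)) with h | h
    swap
    · exact h
    exfalso
    obtain ⟨t, ht⟩ := h
    obtain ⟨s, hss⟩ := hs
    have hcomb : ∃ n : ℤ, f (x ^ (r:ℤ)) = (f (x ^ (2:ℤ))) ^ n := ⟨s * t, by rw [ht, hss, ← zpow_mul]⟩
    obtain ⟨m, hm | hm⟩ := pull f htfG hxr1 hcomb
    · exact arith2r hrp hr3 m (Or.inr (zpow_inj htfG hx (by rw [hm, ← zpow_mul])))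
    · exact arith2r hrp hr3 m (Or.inl (zpow_inj htfG hx (by rw [hm, ← zpow_mul])))
  rcases comp2 f htfG hx hk0 hk1 with h | h
  swap
  · exact h
  exfalso
  obtain ⟨t, ht⟩ := h
  obtain ⟨s, hss⟩ := claim1
  have hcomb : ∃ n : ℤ, f (x ^ k) = (f (x ^ (r:ℤ))) ^ n := ⟨s * t, by rw [ht, hss, ← zpow_mul]⟩
  obtain ⟨m, hm | hm⟩ := pull f htfG hxk1 hcomb
  · exact arithkr hknat hrp hrgt m (Or.inl (zpow_inj htfG hx (by rw [hm, ← zpow_mul])))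
  · exact arithkr hknat hrp hrgt m (Or.inr (zpow_inj htfG hx (by rw [hm, ← zpow_mul])))

end Iso

section Discord

variable {H : Type*} [Group H]

/-- the set of divisors of a nonzero integer is finite -/
lemma divisors_finite {k : ℤ} (hk : k ≠ 0) : Set.Finite {j : ℤ | j ∣ k} := by
  refine (Set.finite_Icc (-(k.natAbs : ℤ)) (k.natAbs : ℤ)).subset ?_
  intro j hj
  have hle : j.natAbs ≤ k.natAbs :=
    Nat.le_of_dvd (Int.natAbs_pos.mpr hk) (Int.natAbs_dvd_natAbs.mpr hj)
  rcases Int.natAbs_eq j with h' | h' <;>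
    simp only [Set.mem_Icc] <;> omega

/-- discord case A: sPos x and sNeg y with y = x^m is impossible -/
lemma K5A (f : powerGraph G ≃g powerGraph H) (htfG : TF G)
    {x y : G} (hx : x ≠ 1) (hy : y ≠ 1) {m : ℤ}
    (hm0 : m ≠ 0) (hm1 : m ≠ 1) (hmm : m ≠ -1) (hyx : y = x ^ m)
    (hsx : ∃ n : ℤ, f (x ^ (2:ℤ)) = (f x) ^ n)
    (hsy : ∃ n : ℤ, f y = (f (y ^ (2:ℤ))) ^ n) : False := by
  have htfH : TF H := tf_trans f htfG
  have hfx1 : f x ≠ 1 := ne_one_push f htfG hx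
  have hfy1 : f y ≠ 1 := ne_one_push f htfG hy
  have hmnat : 2 ≤ m.natAbs := by rcases Int.natAbs_eq m with h' | h' <;> omega
  -- k0 : f y = (f x) ^ k0
  obtain ⟨k0, hk0⟩ : ∃ n : ℤ, f y = (f x) ^ n := by
    obtain ⟨n, hn⟩ := K3pos f htfG hx hsx hm0 hm1 hmm
    exact ⟨n, by rw [hyx, hn]⟩
  have hk0ne : k0 ≠ 0 := fun h => hfy1 (by rw [hk0, h, zpow_zero])
  have hJ : ∀ l : ℕ, ∃ j : ℤ, f (y ^ ((l:ℤ) + 2)) = (f x) ^ j ∧ j ∣ k0 := by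
    intro l
    have hl2 : ((l:ℤ) + 2) ≠ 0 := by omega
    have hl2' : ((l:ℤ) + 2) ≠ 1 := by omega
    have hl2'' : ((l:ℤ) + 2) ≠ -1 := by omega
    have hml : (m * ((l:ℤ) + 2)).natAbs = m.natAbs * ((l:ℤ)+2).natAbs := Int.natAbs_mul _ _
    have hlnat : ((l:ℤ)+2).natAbs = l + 2 := by
      rw [show ((l:ℤ)+2) = ((l+2 : ℕ) : ℤ) by push_cast; ring, Int.natAbs_natCast]
    have hml4 : 4 ≤ (m * ((l:ℤ) + 2)).natAbs := by
      rw [hml, hlnat]; nlinarith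
    obtain ⟨j, hj⟩ := K3pos f htfG hx hsx
      (k := m * ((l:ℤ)+2))
      (by intro h; rw [h] at hml4; simp at hml4)
      (by intro h; rw [h] at hml4; simp at hml4)
      (by intro h; rw [h] at hml4; simp at hml4)
    have hxy : x ^ (m * ((l:ℤ)+2)) = y ^ ((l:ℤ)+2) := by rw [zpow_mul, ← hyx]
    rw [hxy] at hj
    refine ⟨j, hj, ?_⟩
    obtain ⟨t, ht⟩ := K3neg f htfG hy hsy hl2 hl2' hl2''
    have : (f x) ^ k0 = (f x) ^ (j * t) := by
      rw [← hk0, ht, hj, ← zpow_mul]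
    exact ⟨t, zpow_inj htfH hfx1 this⟩
  choose J hJ1 hJ2 using hJ
  have hinj : Function.Injective J := by
    intro l l' h
    have h1 : f (y ^ ((l:ℤ) + 2)) = f (y ^ ((l':ℤ) + 2)) := by rw [hJ1, hJ1, h]
    have := zpow_inj htfG hy (f.injective h1)
    omega
  exact Set.not_infinite.mpr (divisors_finite hk0ne)
    (Set.infinite_of_injective_forall_mem hinj (fun l => hJ2 l))

/-- discord case B: sNeg x and sPos y with y = x^m is impossible -/
lemma K5B (f : powerGraph G ≃g powerGraph H) (htfG : TF G)
    {x y : G} (hx : x ≠ 1) (hy : y ≠ 1) {m : ℤ}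
    (hm0 : m ≠ 0) (hm1 : m ≠ 1) (hmm : m ≠ -1) (hyx : y = x ^ m)
    (hsx : ∃ n : ℤ, f x = (f (x ^ (2:ℤ))) ^ n)
    (hsy : ∃ n : ℤ, f (y ^ (2:ℤ)) = (f y) ^ n) : False := by
  have htfH : TF H := tf_trans f htfG
  have hfx1 : f x ≠ 1 := ne_one_push f htfG hx
  have hfy1 : f y ≠ 1 := ne_one_push f htfG hy
  have hmnat : 2 ≤ m.natAbs := by rcases Int.natAbs_eq m with h' | h' <;> omega
  obtain ⟨k0, hk0⟩ : ∃ n : ℤ, f x = (f y) ^ n := by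
    obtain ⟨n, hn⟩ := K3neg f htfG hx hsx hm0 hm1 hmm
    exact ⟨n, by rw [hn, ← hyx]⟩
  have hk0ne : k0 ≠ 0 := fun h => hfx1 (by rw [hk0, h, zpow_zero])
  have hJ : ∀ l : ℕ, ∃ j : ℤ, f (y ^ ((l:ℤ) + 2)) = (f y) ^ j ∧ j ∣ k0 := by
    intro l
    have hl2 : ((l:ℤ) + 2) ≠ 0 := by omega
    have hl2' : ((l:ℤ) + 2) ≠ 1 := by omega
    have hl2'' : ((l:ℤ) + 2) ≠ -1 := by omega
    obtain ⟨j, hj⟩ := K3pos f htfG hy hsy hl2 hl2' hl2''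
    refine ⟨j, hj, ?_⟩
    have hml : (m * ((l:ℤ) + 2)).natAbs = m.natAbs * ((l:ℤ)+2).natAbs := Int.natAbs_mul _ _
    have hlnat : ((l:ℤ)+2).natAbs = l + 2 := by
      rw [show ((l:ℤ)+2) = ((l+2 : ℕ) : ℤ) by push_cast; ring, Int.natAbs_natCast]
    have hml4 : 4 ≤ (m * ((l:ℤ) + 2)).natAbs := by
      rw [hml, hlnat]; nlinarith
    obtain ⟨t, ht⟩ := K3neg f htfG hx hsx
      (k := m * ((l:ℤ)+2))
      (by intro h; rw [h] at hml4; simp at hml4)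
      (by intro h; rw [h] at hml4; simp at hml4)
      (by intro h; rw [h] at hml4; simp at hml4)
    have hxy : x ^ (m * ((l:ℤ)+2)) = y ^ ((l:ℤ)+2) := by rw [zpow_mul, ← hyx]
    rw [hxy] at ht
    have : (f y) ^ k0 = (f y) ^ (j * t) := by
      rw [← hk0, ht, hj, ← zpow_mul]
    exact ⟨t, zpow_inj htfH hfy1 this⟩
  choose J hJ1 hJ2 using hJ
  have hinj : Function.Injective J := by
    intro l l' h
    have h1 : f (y ^ ((l:ℤ) + 2)) = f (y ^ ((l':ℤ) + 2)) := by rw [hJ1, hJ1, h]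
    have := zpow_inj htfG hy (f.injective h1)
    omega
  exact Set.not_infinite.mpr (divisors_finite hk0ne)
    (Set.infinite_of_injective_forall_mem hinj (fun l => hJ2 l))

/-- orientation sign under inverses -/
lemma sPos_inv (f : powerGraph G ≃g powerGraph H) (htfG : TF G)
    (hcommH : ∀ a b : H, Commute a b) {x : G} (hx : x ≠ 1) :
    (∃ n : ℤ, f (x ^ (2:ℤ)) = (f x) ^ n) ↔
    (∃ n : ℤ, f ((x⁻¹) ^ (2:ℤ)) = (f x⁻¹) ^ n) := by
  have hx2 : x ^ (2:ℤ) ≠ 1 := zpow_ne_one htfG hx two_ne_zero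
  have h1 : f x⁻¹ = (f x)⁻¹ := inv_push f htfG hcommH hx
  have h2 : f ((x⁻¹) ^ (2:ℤ)) = (f (x ^ (2:ℤ)))⁻¹ := by
    rw [inv_zpow, inv_push f htfG hcommH hx2]
  rw [h1, h2]
  constructor
  · rintro ⟨n, hn⟩
    exact ⟨n, by rw [hn, inv_zpow]⟩
  · rintro ⟨n, hn⟩
    refine ⟨n, ?_⟩
    have := congrArg (·⁻¹) hn
    simp only [inv_inv] at this
    rw [this, inv_zpow, inv_inv]

/-- the orientation sign is constant across nontrivial elements -/
lemma sConst (f : powerGraph G ≃g powerGraph H) (htfG : TF G)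
    (hcommH : ∀ a b : H, Commute a b)
    (hconn : ((powerGraph G).induce {g : G | g ≠ 1}).Connected) :
    ∀ x y : G, x ≠ 1 → y ≠ 1 →
      ((∃ n : ℤ, f (x ^ (2:ℤ)) = (f x) ^ n) ↔ (∃ n : ℤ, f (y ^ (2:ℤ)) = (f y) ^ n)) := by
  have hstep : ∀ a b : G, a ≠ 1 → b ≠ 1 → (powerGraph G).Adj a b →
      ((∃ n : ℤ, f (a ^ (2:ℤ)) = (f a) ^ n) ↔ (∃ n : ℤ, f (b ^ (2:ℤ)) = (f b) ^ n)) := by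
    have main : ∀ a b : G, a ≠ 1 → b ≠ 1 → ∀ m : ℤ, m ≠ 0 → b = a ^ m →
        ((∃ n : ℤ, f (a ^ (2:ℤ)) = (f a) ^ n) ↔ (∃ n : ℤ, f (b ^ (2:ℤ)) = (f b) ^ n)) := by
      intro a b ha hb m hm0 hba
      by_cases hm1 : m = 1
      · rw [hba, hm1, zpow_one]
      by_cases hmm : m = -1
      · have hbinv : b = a⁻¹ := by rw [hba, hmm, zpow_neg_one]
        rw [hbinv]
        exact sPos_inv f htfG hcommH ha
      · constructor
        · intro hsa
          by_contra hnb
          rcases comp2 f htfG hb (j := 2) two_ne_zero (by norm_num) with h | h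
          · exact hnb h
          · exact K5A f htfG ha hb hm0 hm1 hmm hba hsa h
        · intro hsb
          by_contra hna
          rcases comp2 f htfG ha (j := 2) two_ne_zero (by norm_num) with h | h
          · exact hna h
          · exact K5B f htfG ha hb hm0 hm1 hmm hba h hsb
    intro a b ha hb hadj
    rcases hadj with ⟨hne, n, hn, hcase | hcase⟩
    · exact main a b ha hb n hn hcase
    · exact (main b a hb ha n hn hcase).symm
  have key : ∀ (u v : {g : G | g ≠ 1}),
      (((powerGraph G).induce {g : G | g ≠ 1}).Walk u v) →
      ((∃ n : ℤ, f ((u:G) ^ (2:ℤ)) = (f (u:G)) ^ n) ↔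
       (∃ n : ℤ, f ((v:G) ^ (2:ℤ)) = (f (v:G)) ^ n)) := by
    intro u v w
    induction w with
    | nil => rfl
    | @cons u u' v h p ih => exact (hstep _ _ u.2 u'.2 h).trans ih
  intro x y hx hy
  exact key ⟨x, hx⟩ ⟨y, hy⟩ (hconn.preconnected ⟨x, hx⟩ ⟨y, hy⟩).some

end Discord

section Correspond

variable {H : Type*} [Group H]

/-- case s ≡ + : the isomorphism preserves the divisibility relation -/
lemma pres_correspond (f : powerGraph G ≃g powerGraph H) (htfG : TF G)
    (hcommH : ∀ a b : H, Commute a b)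
    (hsall : ∀ x : G, x ≠ 1 → ∃ n : ℤ, f (x ^ (2:ℤ)) = (f x) ^ n) :
    ∀ x y : G, x ≠ 1 → y ≠ 1 → ((∃ n : ℤ, y = x ^ n) ↔ (∃ n : ℤ, f y = (f x) ^ n)) := by
  have htfH : TF H := tf_trans f htfG
  intro x y hx hy
  constructor
  · rintro ⟨n, hn⟩
    have hn0 : n ≠ 0 := fun h => hy (by rw [hn, h, zpow_zero])
    by_cases hn1 : n = 1
    · exact ⟨1, by rw [hn, hn1, zpow_one, zpow_one]⟩
    by_cases hnm : n = -1
    · refine ⟨-1, ?_⟩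
      rw [hn, hnm, zpow_neg_one, zpow_neg_one, inv_push f htfG hcommH hx]
    · obtain ⟨t, ht⟩ := K3pos f htfG hx (hsall x hx) hn0 hn1 hnm
      exact ⟨t, by rw [hn, ht]⟩
  · rintro ⟨k, hk⟩
    have hfy1 : f y ≠ 1 := ne_one_push f htfG hy
    have hfx1 : f x ≠ 1 := ne_one_push f htfG hx
    have hk0 : k ≠ 0 := fun h => hfy1 (by rw [hk, h, zpow_zero])
    by_cases hk1 : k = 1
    · have hfyx : f y = f x := by rw [hk, hk1, zpow_one]
      exact ⟨1, by rw [zpow_one, f.injective hfyx]⟩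
    by_cases hkm : k = -1
    · refine ⟨-1, ?_⟩
      have : f y = f x⁻¹ := by rw [hk, hkm, zpow_neg_one, inv_push f htfG hcommH hx]
      have h3 : y = x⁻¹ := f.injective this
      rw [zpow_neg_one, h3]
    obtain ⟨m, hm | hm⟩ := pull f htfG hy ⟨k, hk⟩
    · exact ⟨m, hm⟩
    · -- x = y ^ m : show it collapses
      have hm0 : m ≠ 0 := fun h => hx (by rw [hm, h, zpow_zero])
      by_cases hm1 : m = 1
      · exact ⟨1, by rw [zpow_one, ← (by rw [hm, hm1, zpow_one] : x = y)]⟩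
      by_cases hmm : m = -1
      · refine ⟨-1, ?_⟩
        have : x = y⁻¹ := by rw [hm, hmm, zpow_neg_one]
        rw [zpow_neg_one, this, inv_inv]
      · exfalso
        obtain ⟨t, ht⟩ := K3pos f htfG hy (hsall y hy) hm0 hm1 hmm
        rw [← hm] at ht
        -- f x = (f y)^t, f y = (f x)^k  →  f y = (f y)^(t k)
        have : (f y) ^ (1:ℤ) = (f y) ^ (t * k) := by
          rw [zpow_mul, ← ht, ← hk, zpow_one]
        have h1 := zpow_inj htfH hfy1 this
        rcases Int.isUnit_iff.mp (IsUnit.of_mul_eq_one (a := t) k h1.symm) with h' | h' <;>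
          [exact hk1 (by
            have : t * k = 1 := h1.symm
            rw [h'] at this; omega);
          exact hkm (by
            have : t * k = 1 := h1.symm
            rw [h'] at this; omega)]

/-- case s ≡ − : the isomorphism reverses the divisibility relation -/
lemma anti_correspond (f : powerGraph G ≃g powerGraph H) (htfG : TF G)
    (hcommH : ∀ a b : H, Commute a b)
    (hsall : ∀ x : G, x ≠ 1 → ∃ n : ℤ, f x = (f (x ^ (2:ℤ))) ^ n) :
    ∀ x y : G, x ≠ 1 → y ≠ 1 → ((∃ n : ℤ, y = x ^ n) ↔ (∃ n : ℤ, f x = (f y) ^ n)) := by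
  have htfH : TF H := tf_trans f htfG
  intro x y hx hy
  have hfy1 : f y ≠ 1 := ne_one_push f htfG hy
  have hfx1 : f x ≠ 1 := ne_one_push f htfG hx
  constructor
  · rintro ⟨n, hn⟩
    have hn0 : n ≠ 0 := fun h => hy (by rw [hn, h, zpow_zero])
    by_cases hn1 : n = 1
    · exact ⟨1, by rw [hn, hn1, zpow_one, zpow_one]⟩
    by_cases hnm : n = -1
    · refine ⟨-1, ?_⟩
      have : y = x⁻¹ := by rw [hn, hnm, zpow_neg_one]
      rw [this, zpow_neg_one, inv_push f htfG hcommH hx, inv_inv]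
    · obtain ⟨t, ht⟩ := K3neg f htfG hx (hsall x hx) hn0 hn1 hnm
      exact ⟨t, by rw [ht, hn]⟩
  · rintro ⟨k, hk⟩
    have hk0 : k ≠ 0 := fun h => hfx1 (by rw [hk, h, zpow_zero])
    by_cases hk1 : k = 1
    · exact ⟨1, by rw [zpow_one, ← f.injective (by rw [hk, hk1, zpow_one] : f x = f y)]⟩
    by_cases hkm : k = -1
    · refine ⟨-1, ?_⟩
      have h1 : f y⁻¹ = (f y)⁻¹ := inv_push f htfG hcommH hy
      have h2 : f x = f y⁻¹ := by rw [h1, ← zpow_neg_one, ← hkm]; exact hk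
      have h3 : x = y⁻¹ := f.injective h2
      rw [zpow_neg_one, h3, inv_inv]
    obtain ⟨m, hm | hm⟩ := pull f htfG hx ⟨k, hk⟩
    · -- x = y ^ m
      have hm0 : m ≠ 0 := fun h => hx (by rw [hm, h, zpow_zero])
      by_cases hm1 : m = 1
      · exact ⟨1, by rw [zpow_one, ← (by rw [hm, hm1, zpow_one] : x = y)]⟩
      by_cases hmm : m = -1
      · refine ⟨-1, ?_⟩
        have : x = y⁻¹ := by rw [hm, hmm, zpow_neg_one]
        rw [zpow_neg_one, this, inv_inv]
      · exfalso
        obtain ⟨t, ht⟩ := K3neg f htfG hy (hsall y hy) hm0 hm1 hmm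
        rw [← hm] at ht
        -- f y = (f x)^t and f x = (f y)^k
        have : (f x) ^ (1:ℤ) = (f x) ^ (t * k) := by
          rw [zpow_mul, ← ht, ← hk, zpow_one]
        have h1 := zpow_inj htfH hfx1 this
        rcases Int.isUnit_iff.mp (IsUnit.of_mul_eq_one (a := t) k h1.symm) with h' | h'
        · exact hk1 (by have : t * k = 1 := h1.symm; rw [h'] at this; omega)
        · exact hkm (by have : t * k = 1 := h1.symm; rw [h'] at this; omega)
    · exact ⟨m, hm⟩

end Correspond

section Root

variable {H : Type*} [Group H]

lemma dvd_prime_sq {q d : ℕ} (hq : q.Prime) (hd : d ∣ q * q) : d = 1 ∨ d = q ∨ d = q * q := by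
  by_cases hqd : q ∣ d
  · obtain ⟨e, he⟩ := hqd
    have he' : e ∣ q := by
      have : q * e ∣ q * q := he ▸ hd
      exact (mul_dvd_mul_iff_left (Nat.Prime.ne_zero hq)).mp this
    rcases (Nat.Prime.eq_one_or_self_of_dvd hq e he') with h | h
    · right; left; rw [he, h, mul_one]
    · right; right; rw [he, h]
  · left
    have hco : d.Coprime q := (Nat.Prime.coprime_iff_not_dvd hq).mpr hqd |>.symm
    have hdq : d ∣ q := hco.dvd_of_dvd_mul_right hd
    exact Nat.eq_one_of_dvd_coprimes hco dvd_rfl hdq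

/-- in the orientation-reversing case, the codomain has p-th roots -/
lemma prime_root {G H : Type*} [Group G] [Group H] (φ : G ≃ H)
    (htfG : TF G) (htfH : TF H)
    (hφ1 : φ 1 = 1)
    (hφinv : ∀ x : G, x ≠ 1 → φ x⁻¹ = (φ x)⁻¹)
    (hanti : ∀ x y : G, x ≠ 1 → y ≠ 1 → ((∃ n : ℤ, y = x ^ n) ↔ (∃ n : ℤ, φ x = (φ y) ^ n)))
    (z : H) (hz : z ≠ 1) (p : ℕ) (hp : p.Prime) : ∃ c : H, c ^ (p:ℤ) = z := by
  have hsym1 : φ.symm 1 = 1 := by rw [← hφ1, Equiv.symm_apply_apply]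
  have hsymne : ∀ a : H, a ≠ 1 → φ.symm a ≠ 1 := by
    intro a ha h
    exact ha (by rw [← φ.apply_symm_apply a, h, hφ1])
  have hφne : ∀ x : G, x ≠ 1 → φ x ≠ 1 := by
    intro x hx h
    exact hx (by rw [← φ.symm_apply_apply x, h, hsym1])
  have hp0 : (p:ℤ) ≠ 0 := by exact_mod_cast hp.ne_zero
  set b : H := z ^ (p:ℤ) with hbdef
  have hb1 : b ≠ 1 := zpow_ne_one htfH hz hp0
  set α : G := φ.symm z with hαdef
  set β : G := φ.symm b with hβdef
  have hα1 : α ≠ 1 := hsymne z hz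
  have hβ1 : β ≠ 1 := hsymne b hb1
  have hφα : φ α = z := φ.apply_symm_apply z
  have hφβ : φ β = b := φ.apply_symm_apply b
  obtain ⟨m, hm⟩ : ∃ m : ℤ, α = β ^ m :=
    (hanti β α hβ1 hα1).mpr ⟨p, by rw [hφβ, hφα, hbdef]⟩
  have hm0 : m ≠ 0 := fun h => hα1 (by rw [hm, h, zpow_zero])
  have hm1 : m ≠ 1 := by
    intro h
    have : α = β := by rw [hm, h, zpow_one]
    have hzb : z = b := by rw [← hφα, ← hφβ, this]
    have : z ^ (1:ℤ) = z ^ (p:ℤ) := by rw [zpow_one, ← hbdef, hzb]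
    have := zpow_inj htfH hz this
    have := hp.two_le
    omega
  have hmm1 : m ≠ -1 := by
    intro h
    have hαβ : α = β⁻¹ := by rw [hm, h, zpow_neg_one]
    have hzb : z = b⁻¹ := by rw [← hφα, hαβ, hφinv β hβ1, hφβ]
    have : z ^ (1:ℤ) = z ^ (-(p:ℤ)) := by
      rw [zpow_one, zpow_neg, ← hbdef, hzb]
    have := zpow_inj htfH hz this
    have := hp.two_le
    omega
  have hmnat : 2 ≤ m.natAbs := by rcases Int.natAbs_eq m with h' | h' <;> omega
  -- |m| is prime
  have hqprime : m.natAbs.Prime := by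
    by_contra hnp
    obtain ⟨k, hkdvd, hk2, hklt⟩ := Nat.exists_dvd_of_not_prime2 hmnat hnp
    have hkZ : (k:ℤ) ∣ m := by
      have h1 : (k:ℤ) ∣ (m.natAbs : ℤ) := Int.natCast_dvd_natCast.mpr hkdvd
      rcases Int.natAbs_eq m with h' | h'
      · rwa [← h'] at h1
      · rw [h'] ; exact Dvd.dvd.neg_right h1
    obtain ⟨m₂, hm₂⟩ := hkZ
    set γ : G := β ^ (k:ℤ) with hγdef
    have hk0 : (k:ℤ) ≠ 0 := by exact_mod_cast (by omega : k ≠ 0)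
    have hγ1 : γ ≠ 1 := zpow_ne_one htfG hβ1 hk0
    obtain ⟨t, ht⟩ : ∃ t : ℤ, φ β = (φ γ) ^ t :=
      (hanti β γ hβ1 hγ1).mp ⟨k, rfl⟩
    obtain ⟨j, hj⟩ : ∃ j : ℤ, φ γ = (φ α) ^ j := by
      refine (hanti γ α hγ1 hα1).mp ⟨m₂, ?_⟩
      rw [hγdef, ← zpow_mul, ← hm₂, hm]
    have hj0 : j ≠ 0 := fun h => (hφne γ hγ1) (by rw [hj, h, zpow_zero])
    -- z^p = b = (φ γ)^t = z^(j t)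
    have hpjt : (p:ℤ) = j * t := by
      refine zpow_inj htfH hz ?_
      rw [← hbdef, ← hφβ, ht, hj, hφα, ← zpow_mul]
    have hjdvd : j.natAbs ∣ p := by
      have h1 : j ∣ (p:ℤ) := ⟨t, hpjt⟩
      have h2 : j.natAbs ∣ (p:ℤ).natAbs := Int.natAbs_dvd_natAbs.mpr h1
      rwa [Int.natAbs_natCast] at h2
    rcases hp.eq_one_or_self_of_dvd _ hjdvd with hj1 | hjp
    · -- j = ±1 : γ is α or α⁻¹
      have : j = 1 ∨ j = -1 := by rcases Int.natAbs_eq j with h' | h' <;> omega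
      rcases this with h' | h'
      · have hγα : γ = α := φ.injective (by rw [hj, h', zpow_one])
        have : (k:ℤ) = m := zpow_inj htfG hβ1 (by rw [← hγdef, hγα, hm])
        have : k = m.natAbs := by omega
        omega
      · have hφγ : φ γ = z⁻¹ := by rw [hj, h', zpow_neg_one, hφα]
        have hγα : γ = α⁻¹ := by
          refine φ.injective ?_
          rw [hφγ, hφinv α hα1, hφα]
        have : (k:ℤ) = -m := by
          refine zpow_inj htfG hβ1 ?_
          rw [← hγdef, hγα, hm, ← zpow_neg]
        have : k = m.natAbs := by omega
        omega
    · -- j = ±p : t = ±1, γ is β or β⁻¹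
      have hj' : j = (p:ℤ) ∨ j = -(p:ℤ) := by rcases Int.natAbs_eq j with h' | h' <;> omega
      have ht' : t = 1 ∨ t = -1 := by
        rcases hj' with h' | h' <;> rw [h'] at hpjt
        · have : (p:ℤ) * 1 = (p:ℤ) * t := by rw [mul_one]; exact hpjt
          left; exact (mul_left_cancel₀ hp0 this).symm
        · right
          have h2 : (-(p:ℤ)) * (-1) = (-(p:ℤ)) * t := by rw [← hpjt]; ring
          have := mul_left_cancel₀ (neg_ne_zero.mpr hp0) h2
          omega
      rcases ht' with h' | h'
      · have : φ γ = b := by rw [← hφβ, ht, h', zpow_one]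
        have hγβ : γ = β := φ.injective (by rw [this, hφβ])
        have : (k:ℤ) = 1 := zpow_inj htfG hβ1 (by rw [← hγdef, hγβ, zpow_one])
        omega
      · have hφγb : φ γ = b⁻¹ := by
          have : b = (φ γ)⁻¹ := by rw [← hφβ, ht, h', zpow_neg_one]
          rw [this, inv_inv]
        have hγβ : γ = β⁻¹ := by
          refine φ.injective ?_
          rw [hφγb, hφinv β hβ1, hφβ]
        have : (k:ℤ) = -1 := by
          refine zpow_inj htfG hβ1 ?_
          rw [← hγdef, hγβ, ← zpow_neg_one]
        omega
  set q := m.natAbs with hqdef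
  -- the element w = α^m and its image c
  set w : G := α ^ m with hwdef
  have hw1 : w ≠ 1 := zpow_ne_one htfG hα1 hm0
  set c : H := φ w with hcdef
  have hc1 : c ≠ 1 := hφne w hw1
  obtain ⟨r, hr⟩ : ∃ r : ℤ, z = c ^ r := by
    have := (hanti α w hα1 hw1).mp ⟨m, rfl⟩
    obtain ⟨r, hr⟩ := this
    exact ⟨r, by rw [← hφα, hr, hcdef]⟩
  have hr1 : r ≠ 1 := by
    intro h
    have hzc : z = c := by rw [hr, h, zpow_one]
    have hαw : α = w := φ.injective (show φ α = φ w by rw [hφα, hzc, hcdef])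
    have hmul : m * m = m := by
      have h1 : β ^ (m * m : ℤ) = β ^ (m:ℤ) := by
        rw [zpow_mul, ← hm, ← hwdef, hαw]
      exact zpow_inj htfG hβ1 h1
    have h2 : m * m = 1 * m := by rw [one_mul]; exact hmul
    exact hm1 (mul_right_cancel₀ hm0 h2)
  have hrm1 : r ≠ -1 := by
    intro h
    have hzc : z = c⁻¹ := by rw [hr, h, zpow_neg_one]
    have hαw : α = w⁻¹ := by
      refine φ.injective ?_
      rw [hφinv w hw1, ← hcdef, ← hzc, hφα]
    have hmul : -(m * m) = m := by
      have h1 : β ^ (-(m * m) : ℤ) = β ^ (m:ℤ) := by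
        rw [zpow_neg, zpow_mul, ← hm, ← hwdef, ← hαw]
      exact zpow_inj htfG hβ1 h1
    have h2 : m * m = m * (-1) := by linear_combination -hmul
    exact hmm1 (mul_left_cancel₀ hm0 h2)
  set δ : H := c ^ (p:ℤ) with hδdef
  have hδ1 : δ ≠ 1 := zpow_ne_one htfH hc1 hp0
  set γ₂ : G := φ.symm δ with hγ₂def
  have hγ₂1 : γ₂ ≠ 1 := hsymne δ hδ1
  have hφγ₂ : φ γ₂ = δ := φ.apply_symm_apply δ
  obtain ⟨s, hs⟩ : ∃ s : ℤ, w = γ₂ ^ s :=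
    (hanti γ₂ w hγ₂1 hw1).mpr ⟨p, by rw [hφγ₂, hδdef, hcdef]⟩
  obtain ⟨u, hu⟩ : ∃ u : ℤ, γ₂ = β ^ u := by
    refine (hanti β γ₂ hβ1 hγ₂1).mpr ⟨r, ?_⟩
    rw [hφβ, hφγ₂, hδdef, hbdef, hr, ← zpow_mul, ← zpow_mul, mul_comm]
  have hus : m * m = u * s := by
    refine zpow_inj htfG hβ1 ?_
    rw [zpow_mul, ← hm, ← hwdef, hs, hu, ← zpow_mul, zpow_mul]
  have hudvd : u.natAbs ∣ q * q := by
    have h1 : u ∣ m * m := ⟨s, hus⟩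
    have h2 : u.natAbs ∣ (m * m).natAbs := Int.natAbs_dvd_natAbs.mpr h1
    rwa [Int.natAbs_mul] at h2
  rcases dvd_prime_sq hqprime hudvd with hu1 | hu2 | hu3
  · -- u = ±1 : δ is b or b⁻¹, contradicting r ≠ ±1
    exfalso
    have : u = 1 ∨ u = -1 := by rcases Int.natAbs_eq u with h' | h' <;> omega
    rcases this with h' | h'
    · have hγ₂β : γ₂ = β := by rw [hu, h', zpow_one]
      have hδb : δ = b := by rw [← hφγ₂, hγ₂β, hφβ]
      have h1 : c ^ ((p:ℤ)) = c ^ (r * (p:ℤ)) := by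
        rw [← hδdef, hδb, hbdef, hr, ← zpow_mul]
      have h2 := zpow_inj htfH hc1 h1
      have h3 : 1 * (p:ℤ) = r * (p:ℤ) := by rw [one_mul]; exact h2
      exact hr1 (mul_right_cancel₀ hp0 h3).symm
    · have hγ₂β : γ₂ = β⁻¹ := by rw [hu, h', zpow_neg_one]
      have hδb : δ = b⁻¹ := by rw [← hφγ₂, hγ₂β, hφinv β hβ1, hφβ]
      have h1 : c ^ ((p:ℤ)) = c ^ (-(r * (p:ℤ))) := by
        rw [← hδdef, hδb, hbdef, hr, ← zpow_mul, ← zpow_neg]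
      have h2 := zpow_inj htfH hc1 h1
      have h3 : (-1) * (p:ℤ) = r * (p:ℤ) := by linarith
      exact hrm1 (mul_right_cancel₀ hp0 h3).symm
  · -- u = ±q = ±m : γ₂ is α or α⁻¹, giving the root
    have hum : u = m ∨ u = -m := by
      have h1 : u.natAbs = m.natAbs := by rw [hu2, hqdef]
      rcases Int.natAbs_eq u with h' | h' <;> rcases Int.natAbs_eq m with h'' | h'' <;>
        rw [h1] at h' <;> omega
    rcases hum with h' | h'
    · have hγ₂α : γ₂ = α := by rw [hu, h', ← hm]
      have : δ = z := by rw [← hφγ₂, hγ₂α, hφα]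
      exact ⟨c, by rw [← hδdef, this]⟩
    · have hγ₂α : γ₂ = α⁻¹ := by rw [hu, h', zpow_neg, ← hm]
      have hδz : δ = z⁻¹ := by rw [← hφγ₂, hγ₂α, hφinv α hα1, hφα]
      refine ⟨c⁻¹, ?_⟩
      rw [inv_zpow, ← hδdef, hδz, inv_inv]
  · -- u = ±q² : s = ±1 : δ is c or c⁻¹, contradicting p prime
    exfalso
    have hs1 : s = 1 ∨ s = -1 := by
      have h1 : (m * m).natAbs = u.natAbs * s.natAbs := by
        rw [hus, Int.natAbs_mul]
      rw [Int.natAbs_mul, ← hqdef, hu3] at h1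
      have hq0 : 0 < q := by omega
      have : s.natAbs = 1 := by
        by_cases hs0 : s.natAbs = 0
        · rw [hs0, mul_zero] at h1; nlinarith
        · nlinarith
      rcases Int.natAbs_eq s with h' | h' <;> omega
    rcases hs1 with h' | h'
    · have hwγ₂ : w = γ₂ := by rw [hs, h', zpow_one]
      have : c = δ := by rw [← hφγ₂, ← hwγ₂, hcdef]
      have : c ^ (1:ℤ) = c ^ (p:ℤ) := by rw [zpow_one, ← hδdef, ← this]
      have := zpow_inj htfH hc1 this
      have := hp.two_le
      omega
    · have hγ₂w : γ₂ = w⁻¹ := by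
        have hw' : w = γ₂⁻¹ := by rw [hs, h', zpow_neg_one]
        rw [hw', inv_inv]
      have hδc : δ = c⁻¹ := by rw [← hφγ₂, hγ₂w, hφinv w hw1, hcdef]
      have h1 : c ^ (-1:ℤ) = c ^ (p:ℤ) := by rw [zpow_neg_one, ← hδc, hδdef]
      have := zpow_inj htfH hc1 h1
      have := hp.two_le
      omega

lemma roots_all {H : Type*} [Group H]
    (hroot : ∀ z : H, z ≠ 1 → ∀ p : ℕ, p.Prime → ∃ c : H, c ^ (p:ℤ) = z) :
    ∀ (z : H) (a : ℤ), a ≠ 0 → ∃ y : H, y ^ a = z := by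
  have hnat : ∀ n : ℕ, 0 < n → ∀ z : H, ∃ y, y ^ (n:ℤ) = z := by
    intro n
    induction n using Nat.strong_induction_on with
    | _ n ih =>
      intro hn z
      by_cases hz1 : z = 1
      · exact ⟨1, by rw [one_zpow, hz1]⟩
      by_cases hn1 : n = 1
      · exact ⟨z, by rw [hn1]; exact zpow_one z⟩
      set pf := n.minFac with hpf
      have hpp : pf.Prime := Nat.minFac_prime hn1
      obtain ⟨n', hn'⟩ : ∃ n', n = pf * n' := Nat.minFac_dvd n
      have hn'pos : 0 < n' := by
        rcases Nat.eq_zero_or_pos n' with h | h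
        · rw [h, mul_zero] at hn'; omega
        · exact h
      have hn'lt : n' < n := by
        have h1 : 1 * n' < pf * n' := (Nat.mul_lt_mul_right hn'pos).mpr hpp.one_lt
        rw [one_mul, ← hn'] at h1
        exact h1
      obtain ⟨c, hc⟩ := hroot z hz1 pf hpp
      obtain ⟨y, hy⟩ := ih n' hn'lt hn'pos c
      refine ⟨y, ?_⟩
      have hcast : (n:ℤ) = (n':ℤ) * (pf:ℤ) := by
        rw [hn']; push_cast; ring
      rw [hcast, zpow_mul, hy, hc]
  intro z a ha
  rcases Int.natAbs_eq a with h' | h'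
  · obtain ⟨y, hy⟩ := hnat a.natAbs (by omega) z
    exact ⟨y, by rw [h']; exact hy⟩
  · obtain ⟨y, hy⟩ := hnat a.natAbs (by omega) z
    refine ⟨y⁻¹, ?_⟩
    rw [h', zpow_neg, inv_zpow, inv_inv, hy]

end Root

section Build

/-- build the equivalence in the divisible (orientation-reversing) case -/
lemma build_equiv {G H : Type*} [Group G] [Group H] (htfG : TF G) (htfH : TF H)
    (hcommG : ∀ a b : G, Commute a b) (hcommH : ∀ a b : H, Commute a b)
    (x₀ : G) (y₀ : H) (hx₀ : x₀ ≠ 1) (hy₀ : y₀ ≠ 1)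
    (hdepG : ∀ x : G, x ≠ 1 → ∃ a b : ℤ, a ≠ 0 ∧ b ≠ 0 ∧ x ^ a = x₀ ^ b)
    (hdepH : ∀ y : H, y ≠ 1 → ∃ a b : ℤ, a ≠ 0 ∧ b ≠ 0 ∧ y ^ a = y₀ ^ b)
    (hrootG : ∀ (z : G) (a : ℤ), a ≠ 0 → ∃ y : G, y ^ a = z)
    (hrootH : ∀ (z : H) (a : ℤ), a ≠ 0 → ∃ y : H, y ^ a = z) :
    ∃ e : G ≃ H, ∀ x y : G, powArc x y ↔ powArc (e x) (e y) := by
  classical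
  choose A B hA hB hrep using hdepG
  choose A' B' hA' hB' hrep' using hdepH
  choose RH hRH using hrootH
  choose RG hRG using hrootG
  set E : G → H := fun x => if hx : x = 1 then 1 else RH (y₀ ^ (B x hx)) (A x hx) (hA x hx)
    with hEdef
  set E' : H → G := fun y => if hy : y = 1 then 1 else RG (x₀ ^ (B' y hy)) (A' y hy) (hA' y hy)
    with hE'def
  have hE1 : E 1 = 1 := by rw [hEdef]; simp
  have hE'1 : E' 1 = 1 := by rw [hE'def]; simp
  have hEspec : ∀ (x : G) (hx : x ≠ 1), (E x) ^ (A x hx) = y₀ ^ (B x hx) := by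
    intro x hx
    rw [hEdef]
    simp only [dif_neg hx]
    exact hRH _ _ _
  have hE'spec : ∀ (y : H) (hy : y ≠ 1), (E' y) ^ (A' y hy) = x₀ ^ (B' y hy) := by
    intro y hy
    rw [hE'def]
    simp only [dif_neg hy]
    exact hRG _ _ _
  have hEne : ∀ (x : G) (hx : x ≠ 1), E x ≠ 1 := by
    intro x hx h
    have := hEspec x hx
    rw [h, one_zpow] at this
    exact zpow_ne_one htfH hy₀ (hB x hx) this.symm
  have hE'ne : ∀ (y : H) (hy : y ≠ 1), E' y ≠ 1 := by
    intro y hy h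
    have := hE'spec y hy
    rw [h, one_zpow] at this
    exact zpow_ne_one htfG hx₀ (hB' y hy) this.symm
  -- the key exchange lemma
  have hEKEY : ∀ (x : G) (hx : x ≠ 1) (a b : ℤ), a ≠ 0 → x ^ a = x₀ ^ b →
      (E x) ^ a = y₀ ^ b := by
    intro x hx a b ha hab
    have hcross : b * A x hx = B x hx * a := by
      refine zpow_inj htfG hx₀ ?_
      have h1 : x ^ (a * A x hx) = x₀ ^ (b * A x hx) := by
        rw [zpow_mul, hab, ← zpow_mul]
      have h2 : x ^ (a * A x hx) = x₀ ^ (B x hx * a) := by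
        rw [mul_comm a (A x hx), zpow_mul, hrep x hx, ← zpow_mul]
      rw [← h1, h2]
    refine uniq_pow htfH hcommH (hA x hx) ?_
    -- ((E x)^a)^(A) = (y₀^b)^(A)
    rw [← zpow_mul, ← zpow_mul]
    rw [mul_comm a (A x hx), zpow_mul, hEspec x hx, ← zpow_mul]
    rw [← hcross]
  have hE'KEY : ∀ (y : H) (hy : y ≠ 1) (a b : ℤ), a ≠ 0 → y ^ a = y₀ ^ b →
      (E' y) ^ a = x₀ ^ b := by
    intro y hy a b ha hab
    have hcross : b * A' y hy = B' y hy * a := by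
      refine zpow_inj htfH hy₀ ?_
      have h1 : y ^ (a * A' y hy) = y₀ ^ (b * A' y hy) := by
        rw [zpow_mul, hab, ← zpow_mul]
      have h2 : y ^ (a * A' y hy) = y₀ ^ (B' y hy * a) := by
        rw [mul_comm a (A' y hy), zpow_mul, hrep' y hy, ← zpow_mul]
      rw [← h1, h2]
    refine uniq_pow htfG hcommG (hA' y hy) ?_
    rw [← zpow_mul, ← zpow_mul]
    rw [mul_comm a (A' y hy), zpow_mul, hE'spec y hy, ← zpow_mul]
    rw [← hcross]
  have hMIX : ∀ (x y : G), x ≠ 1 → y ≠ 1 → ∀ k : ℤ, y = x ^ k → E y = (E x) ^ k := by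
    intro x y hx hy k hk
    have h1 : y ^ (A x hx) = x₀ ^ (B x hx * k) := by
      rw [hk, ← zpow_mul, mul_comm k (A x hx), zpow_mul, hrep x hx, ← zpow_mul, mul_comm]
    have h2 : (E y) ^ (A x hx) = y₀ ^ (B x hx * k) := hEKEY y hy (A x hx) _ (hA x hx) h1
    refine uniq_pow htfH hcommH (hA x hx) ?_
    have h3 : ((E x) ^ k) ^ (A x hx) = y₀ ^ (B x hx * k) := by
      rw [← zpow_mul, mul_comm k (A x hx), zpow_mul, hEspec x hx, ← zpow_mul]
    rw [h2, h3]
  have hMIX' : ∀ (x y : H), x ≠ 1 → y ≠ 1 → ∀ k : ℤ, y = x ^ k → E' y = (E' x) ^ k := by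
    intro x y hx hy k hk
    have h1 : y ^ (A' x hx) = y₀ ^ (B' x hx * k) := by
      rw [hk, ← zpow_mul, mul_comm k (A' x hx), zpow_mul, hrep' x hx, ← zpow_mul, mul_comm]
    have h2 : (E' y) ^ (A' x hx) = x₀ ^ (B' x hx * k) := hE'KEY y hy (A' x hx) _ (hA' x hx) h1
    refine uniq_pow htfG hcommG (hA' x hx) ?_
    have h3 : ((E' x) ^ k) ^ (A' x hx) = x₀ ^ (B' x hx * k) := by
      rw [← zpow_mul, mul_comm k (A' x hx), zpow_mul, hE'spec x hx, ← zpow_mul]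
    rw [h2, h3]
  have hLI : ∀ x : G, E' (E x) = x := by
    intro x
    by_cases hx : x = 1
    · rw [hx, hE1, hE'1]
    · have h1 := hEspec x hx
      have h2 : (E' (E x)) ^ (A x hx) = x₀ ^ (B x hx) :=
        hE'KEY (E x) (hEne x hx) _ _ (hA x hx) h1
      refine uniq_pow htfG hcommG (hA x hx) ?_
      rw [h2, hrep x hx]
  have hRI : ∀ y : H, E (E' y) = y := by
    intro y
    by_cases hy : y = 1
    · rw [hy, hE'1, hE1]
    · have h1 := hE'spec y hy
      have h2 : (E (E' y)) ^ (A' y hy) = y₀ ^ (B' y hy) :=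
        hEKEY (E' y) (hE'ne y hy) _ _ (hA' y hy) h1
      refine uniq_pow htfH hcommH (hA' y hy) ?_
      rw [h2, hrep' y hy]
  refine ⟨⟨E, E', hLI, hRI⟩, ?_⟩
  intro x y
  constructor
  · rintro ⟨hxy, n, hn0, hyn⟩
    have hx : x ≠ 1 := by
      rintro rfl
      rw [one_zpow] at hyn
      exact hxy hyn.symm
    have hy : y ≠ 1 := by
      rintro rfl
      exact zpow_ne_one htfG hx hn0 hyn.symm
    refine ⟨?_, n, hn0, ?_⟩
    · intro h
      have h1 : E' (E x) = E' (E y) := by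
        show E' (Equiv.mk E E' hLI hRI x) = E' (Equiv.mk E E' hLI hRI y)
        rw [h]
      rw [hLI, hLI] at h1
      exact hxy h1
    · show E y = (E x) ^ n
      exact hMIX x y hx hy n hyn
  · rintro ⟨hxy, n, hn0, hyn⟩
    have hxy' : x ≠ y := by
      rintro rfl
      exact hxy rfl
    have hExy : E y = (E x) ^ n := hyn
    have hx : x ≠ 1 := by
      rintro rfl
      rw [show E (1:G) = 1 from hE1, one_zpow] at hExy
      -- E y = 1 means y = 1
      have : E' (E y) = E' 1 := by rw [hExy]
      rw [hLI, hE'1] at this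
      exact hxy' this.symm
    have hy : y ≠ 1 := by
      rintro rfl
      rw [show E (1:G) = 1 from hE1] at hExy
      exact zpow_ne_one htfH (hEne x hx) hn0 hExy.symm
    have h1 : E' (E y) = (E' (E x)) ^ n := hMIX' (E x) (E y) (hEne x hx) (hEne y hy) n hExy
    rw [hLI, hLI] at h1
    exact ⟨hxy', n, hn0, h1⟩

end Build

section Arcs

variable {H : Type*} [Group H]

/-- case s ≡ + : f itself preserves arcs -/
lemma arcs_from_pres (f : powerGraph G ≃g powerGraph H) (htfG : TF G)
    (hcorr : ∀ x y : G, x ≠ 1 → y ≠ 1 → ((∃ n : ℤ, y = x ^ n) ↔ (∃ n : ℤ, f y = (f x) ^ n))) :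
    ∀ x y : G, powArc x y ↔ powArc (f x) (f y) := by
  have htfH : TF H := tf_trans f htfG
  intro x y
  constructor
  · rintro ⟨hxy, n, hn0, hyn⟩
    have hx : x ≠ 1 := by
      rintro rfl
      rw [one_zpow] at hyn
      exact hxy hyn.symm
    have hy : y ≠ 1 := by
      rintro rfl
      exact zpow_ne_one htfG hx hn0 hyn.symm
    obtain ⟨k, hk⟩ := (hcorr x y hx hy).mp ⟨n, hyn⟩
    have hk0 : k ≠ 0 := by
      intro h
      rw [h, zpow_zero] at hk
      exact ne_one_push f htfG hy hk
    exact ⟨fun h => hxy (f.injective h), k, hk0, hk⟩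
  · rintro ⟨hfxy, k, hk0, hfk⟩
    have hxy : x ≠ y := by rintro rfl; exact hfxy rfl
    have hx : x ≠ 1 := by
      rintro rfl
      rw [iso_one f htfG, one_zpow] at hfk
      have : y = 1 := f.injective (by rw [hfk, iso_one f htfG])
      exact hxy this.symm
    have hy : y ≠ 1 := by
      rintro rfl
      rw [iso_one f htfG] at hfk
      exact zpow_ne_one htfH (ne_one_push f htfG hx) hk0 hfk.symm
    obtain ⟨n, hn⟩ := (hcorr x y hx hy).mpr ⟨k, hfk⟩
    have hn0 : n ≠ 0 := by
      intro h
      rw [h, zpow_zero] at hn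
      exact hy hn
    exact ⟨hxy, n, hn0, hn⟩

end Arcs

end PG18

/-- If `G` is a torsion-free group of nilpotency class at most 2 whose power
graph restricted to the non-identity elements is connected, and `H` is a group
of nilpotency class at most 2 with `P(G) ≅ P(H)`, then the directed power graphs
of `G` and `H` are isomorphic. -/
theorem stmt_18 (G H : Type*) [Group G] [Group H]
    (htf : ∀ g : G, g ≠ 1 → ¬ IsOfFinOrder g)
    (hGnil : commutator G ≤ Subgroup.center G)
    (hHnil : commutator H ≤ Subgroup.center H)
    (hconn : ((powerGraph G).induce {g : G | g ≠ 1}).Connected)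
    (h : Nonempty (powerGraph G ≃g powerGraph H)) :
    ∃ e : G ≃ H, ∀ x y : G, powArc x y ↔ powArc (e x) (e y) := by
  obtain ⟨f⟩ := h
  obtain ⟨⟨x₀, hx₀⟩⟩ := hconn.nonempty
  have hx₀' : x₀ ≠ 1 := hx₀
  have htfG : PG18.TF G := htf
  have hcommG : ∀ a b : G, Commute a b := PG18.comm_all htfG hGnil hconn
  have htfH : PG18.TF H := PG18.tf_trans f htfG
  have hconnH : ((powerGraph H).induce {h : H | h ≠ 1}).Connected :=
    PG18.conn_trans f htfG hconn
  have hcommH : ∀ a b : H, Commute a b := PG18.comm_all htfH hHnil hconnH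
  have hf1 : f 1 = 1 := PG18.iso_one f htfG
  by_cases hs : ∃ n : ℤ, f (x₀ ^ (2:ℤ)) = (f x₀) ^ n
  · have hsall : ∀ x : G, x ≠ 1 → ∃ n : ℤ, f (x ^ (2:ℤ)) = (f x) ^ n := fun x hx =>
      (PG18.sConst f htfG hcommH hconn x x₀ hx hx₀').mpr hs
    have hcorr := PG18.pres_correspond f htfG hcommH hsall
    exact ⟨f.toEquiv, PG18.arcs_from_pres f htfG hcorr⟩
  · have hnegall : ∀ x : G, x ≠ 1 → ∃ n : ℤ, f x = (f (x ^ (2:ℤ))) ^ n := by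
      intro x hx
      rcases PG18.comp2 f htfG hx (j := 2) two_ne_zero (by norm_num) with hc | hc
      · exact absurd ((PG18.sConst f htfG hcommH hconn x₀ x hx₀' hx).mpr hc) hs
      · exact hc
    have hanti := PG18.anti_correspond f htfG hcommH hnegall
    have hφinv : ∀ x : G, x ≠ 1 → f x⁻¹ = (f x)⁻¹ := fun x hx =>
      PG18.inv_push f htfG hcommH hx
    have hrootH : ∀ z : H, z ≠ 1 → ∀ p : ℕ, p.Prime → ∃ c : H, c ^ (p:ℤ) = z :=
      fun z hz p hp => PG18.prime_root f.toEquiv htfG htfH hf1 hφinv hanti z hz p hp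
    have hsym1 : f.symm 1 = 1 := PG18.symm_one f htfG
    have hsymne : ∀ a : H, a ≠ 1 → (f.symm a : G) ≠ 1 := by
      intro a ha hh
      exact ha (by rw [← f.apply_symm_apply a, hh, hf1])
    have hsyminv : ∀ a : H, a ≠ 1 → f.symm a⁻¹ = (f.symm a)⁻¹ := by
      intro a ha
      apply f.injective
      rw [f.apply_symm_apply, hφinv (f.symm a) (hsymne a ha), f.apply_symm_apply]
    have hantiSym : ∀ a b : H, a ≠ 1 → b ≠ 1 →
        ((∃ n : ℤ, b = a ^ n) ↔ (∃ n : ℤ, f.symm a = (f.symm b) ^ n)) := by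
      intro a b ha hb
      have := hanti (f.symm b) (f.symm a) (hsymne b hb) (hsymne a ha)
      rw [f.apply_symm_apply, f.apply_symm_apply] at this
      exact this.symm
    have hrootG : ∀ z : G, z ≠ 1 → ∀ p : ℕ, p.Prime → ∃ c : G, c ^ (p:ℤ) = z :=
      fun z hz p hp =>
        PG18.prime_root f.toEquiv.symm htfH htfG hsym1 hsyminv hantiSym z hz p hp
    have hy₀ : (f x₀ : H) ≠ 1 := PG18.ne_one_push f htfG hx₀'
    exact PG18.build_equiv htfG htfH hcommG hcommH x₀ (f x₀) hx₀' hy₀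
      (fun x hx => PG18.dep_all hconn x x₀ hx hx₀')
      (fun y hy => PG18.dep_all hconnH y (f x₀) hy hy₀)
      (PG18.roots_all hrootG) (PG18.roots_all hrootH)
end
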